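/- arXiv:1408.0641 — 5 statements merged into one kernel-verified Lean document; each statement's English description precedes it below -/
import Mathlib

section
/- For 0 < λ < 1, lim_{N→∞} ∑_{n=1}^N (∏_{i=1}^{n-1} (1 - i/N)) · λ^{n-1}/n = -log(1-λ)/λ. -/
open Finset Filter Topology

theorem stmt_8 (l : ℝ) (hl : 0 < l) (hl1 : l < 1) :
    Filter.Tendsto
      (fun N : ℕ => ∑ n ∈ Finset.Icc 1 N,
        (∏ i ∈ Finset.Icc 1 (n - 1), (1 - (i : ℝ) / N)) * l ^ (n - 1) / n)
      Filter.atTop (nhds (-Real.log (1 - l) / l)) := by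
  have hl0 : l ≠ 0 := ne_of_gt hl
  set g : ℕ → ℝ := fun k => l ^ k / (k + 1) with hg
  have hgsum : HasSum g (-Real.log (1 - l) / l) := by
    have h := (Real.hasSum_pow_div_log_of_abs_lt_one
      (x := l) (by rw [abs_of_pos hl]; exact hl1)).div_const l
    convert h using 2 with k
    · rfl
    rw [hg]
    field_simp
    ring
  set f : ℕ → ℕ → ℝ := fun N k =>
    if k < N then (∏ i ∈ Finset.Icc 1 k, (1 - (i : ℝ) / N)) * l ^ k / (k + 1) else 0 with hf
  have hprod_mem : ∀ {N k : ℕ}, k < N → (0:ℝ) ≤ ∏ i ∈ Finset.Icc 1 k, (1 - (i : ℝ) / N)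
      ∧ (∏ i ∈ Finset.Icc 1 k, (1 - (i : ℝ) / N)) ≤ 1 := by
    intro N k hkN
    have hN : (0:ℝ) < N := by
      exact_mod_cast Nat.lt_of_le_of_lt (Nat.zero_le k) hkN
    have hfac : ∀ i ∈ Finset.Icc 1 k, (0:ℝ) ≤ 1 - (i : ℝ) / N := by
      intro i hi
      have hi' : (i : ℝ) ≤ k := by exact_mod_cast (Finset.mem_Icc.mp hi).2
      have : (i : ℝ) / N ≤ 1 := by
        rw [div_le_one hN]
        calc (i:ℝ) ≤ k := hi'
        _ ≤ N := by exact_mod_cast hkN.le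
      linarith
    refine ⟨Finset.prod_nonneg hfac, Finset.prod_le_one hfac ?_⟩
    intro i hi
    have : (0:ℝ) ≤ (i : ℝ) / N := by positivity
    linarith
  have hsum_eq : ∀ N : ℕ,
      (∑ n ∈ Finset.Icc 1 N,
        (∏ i ∈ Finset.Icc 1 (n - 1), (1 - (i : ℝ) / N)) * l ^ (n - 1) / n)
      = ∑' k, f N k := by
    intro N
    rw [← Finset.Ico_add_one_right_eq_Icc, Finset.sum_Ico_eq_sum_range]
    rw [tsum_eq_sum (s := Finset.range N) (by
      intro k hk
      simp only [Finset.mem_range, not_lt] at hk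
      simp [hf, Nat.not_lt.mpr hk])]
    simp only [Nat.succ_sub_one, Nat.add_sub_cancel]
    apply Finset.sum_congr rfl
    intro k hk
    simp only [Finset.mem_range] at hk
    simp [hf, hk, Nat.add_sub_cancel_left, Nat.cast_add, Nat.cast_one, add_comm 1 k]
  simp only [hsum_eq]
  rw [← hgsum.tsum_eq]
  apply tendsto_tsum_of_dominated_convergence (bound := fun k => l ^ k)
  · exact summable_geometric_of_lt_one hl.le hl1
  · intro k
    have hlim : Tendsto (fun N : ℕ => ∏ i ∈ Finset.Icc 1 k, (1 - (i : ℝ) / N)) atTop (𝓝 1) := by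
      have : Tendsto (fun N : ℕ => ∏ i ∈ Finset.Icc 1 k, (1 - (i : ℝ) / N)) atTop
          (𝓝 (∏ i ∈ Finset.Icc 1 k, 1)) := by
        apply tendsto_finset_prod
        intro i _
        have : Tendsto (fun N : ℕ => (i : ℝ) / N) atTop (𝓝 0) :=
          tendsto_const_div_atTop_nhds_zero_nat (i : ℝ)
        simpa using (tendsto_const_nhds (x := (1:ℝ))).sub this
      simpa using this
    have h2 : Tendsto (fun N : ℕ => (∏ i ∈ Finset.Icc 1 k, (1 - (i : ℝ) / N)) * l ^ k / (k + 1))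
        atTop (𝓝 (g k)) := by
      have := (hlim.mul_const (l ^ k)).div_const ((k:ℝ) + 1)
      simpa [hg] using this
    apply h2.congr'
    filter_upwards [eventually_gt_atTop k] with N hN
    simp [hf, hN]
  · filter_upwards with N k
    by_cases hk : k < N
    · simp only [hf, if_pos hk]
      have h := hprod_mem hk
      rw [Real.norm_eq_abs, abs_of_nonneg
        (div_nonneg (mul_nonneg h.1 (pow_nonneg hl.le k)) (by positivity))]
      have h1 : (∏ i ∈ Finset.Icc 1 k, (1 - (i : ℝ) / N)) * l ^ k / (k + 1) ≤ l ^ k / 1 := by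
        apply div_le_div₀ (by positivity)
        · exact mul_le_of_le_one_left (pow_nonneg hl.le k) h.2
        · norm_num
        · norm_num
      simpa using h1
    · simp only [hf, if_neg hk, norm_zero]
      positivity
end

section
/- lim_{N→∞} (∑_{n=1}^N (∏_{i=1}^{n-1} (1 - i/N)) · (1/n)) / ((1/2)·log N) = 1. (The expected duration of the critical (λ = 1) SIS epidemic is asymptotically (1/2)·log N.) -/
open Finset Filter


lemma harmonic_lower (m : ℕ) : Real.log (m + 1) ≤ ∑ n ∈ Icc 1 m, (1 : ℝ) / n := by
  have key : ∀ n : ℕ, 1 ≤ n → Real.log ((n:ℝ) + 1) - Real.log n ≤ 1 / n := by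
    intro n hn
    have hn0 : (0:ℝ) < n := by exact_mod_cast hn
    have h1 : Real.log ((n:ℝ) + 1) - Real.log n = Real.log (((n:ℝ) + 1) / n) := by
      rw [Real.log_div (by positivity) (ne_of_gt hn0)]
    rw [h1]
    have := Real.log_le_sub_one_of_pos (x := ((n:ℝ) + 1) / n) (by positivity)
    calc Real.log (((n:ℝ) + 1) / n) ≤ ((n:ℝ) + 1) / n - 1 := this
      _ = 1 / n := by field_simp; ring
  have htel := Finset.sum_range_sub (fun i : ℕ => Real.log ((i:ℝ) + 1)) m
  simp only [Nat.cast_add, Nat.cast_one, Nat.cast_zero] at htel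
  rw [show (Real.log (0 + 1) : ℝ) = 0 by norm_num] at htel
  rw [sub_zero] at htel
  rw [← htel]
  rw [← Finset.Ico_add_one_right_eq_Icc, Finset.sum_Ico_eq_sum_range]
  first
  | simp only [Nat.add_sub_cancel]
  | skip
  apply Finset.sum_le_sum
  intro i _
  have := key (i + 1) (by omega)
  push_cast at this ⊢
  have e1 : (1:ℝ) + i = i + 1 := by ring
  rw [e1]
  linarith

lemma harmonic_upper (m : ℕ) (hm : 1 ≤ m) :
    ∑ n ∈ Icc 1 m, (1 : ℝ) / n ≤ 1 + Real.log m := by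
  have key : ∀ n : ℕ, 2 ≤ n → (1 : ℝ) / n ≤ Real.log n - Real.log ((n:ℝ) - 1) := by
    intro n hn
    have hn0 : (0:ℝ) < (n:ℝ) - 1 := by
      have : (2:ℝ) ≤ n := by exact_mod_cast hn
      linarith
    have hn0' : (0:ℝ) < n := by linarith
    have h1 : Real.log n - Real.log ((n:ℝ) - 1) = - Real.log (((n:ℝ) - 1) / n) := by
      rw [Real.log_div (ne_of_gt hn0) (ne_of_gt hn0')]
      ring
    rw [h1]
    have := Real.log_le_sub_one_of_pos (x := ((n:ℝ) - 1) / n) (by positivity)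
    have h2 : ((n:ℝ) - 1) / n - 1 = -(1 / n) := by field_simp; ring
    linarith [this.trans_eq h2]
  have hsplit : ∑ n ∈ Ioc (0:ℕ) 1, (1:ℝ)/n + ∑ n ∈ Ioc 1 m, (1:ℝ)/n
      = ∑ n ∈ Ioc 0 m, (1:ℝ)/n :=
    Finset.sum_Ioc_consecutive _ (by omega) hm
  have h1 : ∑ n ∈ Ioc (0:ℕ) 1, (1:ℝ)/n = 1 := by simp
  have htel := Finset.sum_range_sub (fun i : ℕ => Real.log ((i:ℝ) + 1)) (m - 1)
  have hm' : ((m - 1 : ℕ) : ℝ) = (m:ℝ) - 1 := by push_cast [hm]; ring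
  rw [hm'] at htel
  simp only [Nat.cast_add, Nat.cast_one, Nat.cast_zero] at htel
  rw [show (Real.log (0 + 1) : ℝ) = 0 by norm_num, sub_zero] at htel
  rw [show (m:ℝ) - 1 + 1 = m by ring] at htel
  have h2 : ∑ n ∈ Ioc 1 m, (1:ℝ)/n ≤ Real.log m := by
    rw [← htel, show Ioc 1 m = Ico 2 (m + 1) by ext x; simp; omega, Finset.sum_Ico_eq_sum_range]
    rw [show m + 1 - 2 = m - 1 by omega]
    apply Finset.sum_le_sum
    intro i _
    have := key (i + 2) (by omega)
    push_cast at this ⊢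
    have e1 : (2:ℝ) + i = i + 2 := by ring
    rw [e1]
    have e2 : (i:ℝ) + 2 - 1 = i + 1 := by ring
    rw [e2] at this
    have e3 : (i:ℝ) + 1 + 1 = i + 2 := by ring
    rw [e3]
    linarith
  calc ∑ n ∈ Icc 1 m, (1:ℝ)/n = ∑ n ∈ Ioc 0 m, (1:ℝ)/n := by
        congr 1
    _ = ∑ n ∈ Ioc (0:ℕ) 1, (1:ℝ)/n + ∑ n ∈ Ioc 1 m, (1:ℝ)/n := hsplit.symm
    _ ≤ 1 + Real.log m := by rw [h1]; linarith

lemma bernoulli_prod (s : Finset ℕ) (f : ℕ → ℝ) (h0 : ∀ i ∈ s, 0 ≤ f i)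
    (h1 : ∀ i ∈ s, f i ≤ 1) : 1 - ∑ i ∈ s, f i ≤ ∏ i ∈ s, (1 - f i) := by
  classical
  induction s using Finset.induction with
  | empty => simp
  | insert a s ha ih =>
    rw [Finset.sum_insert ha, Finset.prod_insert ha]
    have h0' : ∀ i ∈ s, 0 ≤ f i := fun i hi => h0 i (Finset.mem_insert_of_mem hi)
    have h1' : ∀ i ∈ s, f i ≤ 1 := fun i hi => h1 i (Finset.mem_insert_of_mem hi)
    have ih' := ih h0' h1'
    have hfa0 : 0 ≤ f a := h0 a (Finset.mem_insert_self a s)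
    have hfa1 : f a ≤ 1 := h1 a (Finset.mem_insert_self a s)
    have hsum0 : 0 ≤ ∑ i ∈ s, f i := Finset.sum_nonneg h0'
    nlinarith [ih']

lemma S_upper (N : ℕ) (hN : 2 ≤ N) :
    (∑ n ∈ Icc 1 N, (∏ i ∈ Icc 1 (n - 1), (1 - (i : ℝ) / N)) * (1 / (n:ℝ)))
      ≤ 1 + Real.log 2 + (1/2) * Real.log N + 1 := by
  set M := Nat.sqrt N with hMdef
  have hM1 : 1 ≤ M := by
    have : 0 < M := Nat.sqrt_pos.mpr (by omega)
    omega
  have hMN : M + 1 ≤ N := by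
    have := Nat.sqrt_lt_self (by omega : 1 < N)
    omega
  have hNpos : (0:ℝ) < N := by exact_mod_cast (by omega : 0 < N)
  have hNsq : (N:ℝ) < ((M:ℝ) + 1)^2 := by
    have h := Nat.lt_succ_sqrt' N
    have h2 : (N:ℝ) < ((M:ℝ)+1)^2 := by
      have : N < (M+1)^2 := h
      exact_mod_cast this
    exact h2
  set r : ℝ := 1 - ((M:ℝ) + 1)/N with hrdef
  have hMNr : ((M:ℝ) + 1) ≤ N := by exact_mod_cast hMN
  have hr0 : 0 ≤ r := by
    rw [hrdef, sub_nonneg]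
    exact div_le_one_of_le₀ hMNr hNpos.le
  have hr1 : r < 1 := by
    have : 0 < ((M:ℝ)+1)/N := by positivity
    rw [hrdef]; linarith
  have h1r : 1 - r = ((M:ℝ) + 1)/N := by rw [hrdef]; ring
  have h1rpos : 0 < 1 - r := by linarith
  have hfac0 : ∀ i : ℕ, i ≤ N → 0 ≤ 1 - (i:ℝ)/N := by
    intro i hi
    have h1 : (i:ℝ) ≤ N := by exact_mod_cast hi
    have h2 : (i:ℝ)/N ≤ 1 := div_le_one_of_le₀ h1 hNpos.le
    linarith
  have hfac1 : ∀ i : ℕ, 1 - (i:ℝ)/N ≤ 1 := by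
    intro i
    have : 0 ≤ (i:ℝ)/N := by positivity
    linarith
  have hprod0 : ∀ n : ℕ, n ≤ N + 1 → 0 ≤ (∏ i ∈ Icc 1 (n - 1), (1 - (i:ℝ)/N)) := by
    intro n hn
    apply Finset.prod_nonneg
    intro i hi
    simp only [mem_Icc] at hi
    exact hfac0 i (by omega)
  have hprod1 : ∀ n : ℕ, n ≤ N + 1 → (∏ i ∈ Icc 1 (n - 1), (1 - (i:ℝ)/N)) ≤ 1 := by
    intro n hn
    apply Finset.prod_le_one
    · intro i hi
      simp only [mem_Icc] at hi
      exact hfac0 i (by omega)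
    · intro i _; exact hfac1 i
  have hsplit : (∑ n ∈ Ioc 0 (M+1), (∏ i ∈ Icc 1 (n - 1), (1 - (i:ℝ)/N)) * (1/(n:ℝ)))
      + (∑ n ∈ Ioc (M+1) N, (∏ i ∈ Icc 1 (n - 1), (1 - (i:ℝ)/N)) * (1/(n:ℝ)))
      = ∑ n ∈ Icc 1 N, (∏ i ∈ Icc 1 (n - 1), (1 - (i:ℝ)/N)) * (1/(n:ℝ)) := by
    rw [Finset.sum_Ioc_consecutive _ (Nat.zero_le _) (by omega : M + 1 ≤ N)]
    congr 1
  -- part 1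
  have hpart1 : (∑ n ∈ Ioc 0 (M+1), (∏ i ∈ Icc 1 (n - 1), (1 - (i:ℝ)/N)) * (1/(n:ℝ)))
      ≤ 1 + Real.log 2 + (1/2) * Real.log N := by
    have step1 : (∑ n ∈ Ioc 0 (M+1), (∏ i ∈ Icc 1 (n - 1), (1 - (i:ℝ)/N)) * (1/(n:ℝ)))
        ≤ ∑ n ∈ Icc 1 (M+1), (1:ℝ)/n := by
      have he : (Ioc 0 (M+1) : Finset ℕ) = Icc 1 (M+1) := by congr 1
      rw [he]
      apply Finset.sum_le_sum
      intro n hn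
      simp only [mem_Icc] at hn
      exact mul_le_of_le_one_left (by positivity) (hprod1 n (by omega))
    have step2 : ∑ n ∈ Icc 1 (M+1), (1:ℝ)/n ≤ 1 + Real.log ((M+1 : ℕ) : ℝ) :=
      harmonic_upper (M+1) (by omega)
    have hsqrt1 : 1 ≤ Real.sqrt N := by
      rw [show (1:ℝ) = Real.sqrt 1 by simp]
      exact Real.sqrt_le_sqrt (by exact_mod_cast (by omega : 1 ≤ N))
    have hMsqrt : (M:ℝ) ≤ Real.sqrt N := by
      rw [show (M:ℝ) = Real.sqrt ((M:ℝ)^2) by rw [Real.sqrt_sq (by positivity)]]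
      apply Real.sqrt_le_sqrt
      exact_mod_cast Nat.sqrt_le' N
    have step3 : Real.log ((M+1:ℕ):ℝ) ≤ Real.log 2 + (1/2) * Real.log N := by
      have h2 : (((M+1:ℕ)):ℝ) ≤ 2 * Real.sqrt N := by push_cast; linarith
      have h3 := Real.log_le_log (by positivity : (0:ℝ) < ((M+1:ℕ):ℝ)) h2
      rw [Real.log_mul (by norm_num) (by positivity), Real.log_sqrt hNpos.le] at h3
      linarith
    linarith
  -- part 2
  have hcard : ∀ n : ℕ, (Ioc (M+1) (n-1)).card = n - 1 - (M+1) := by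
    intro n; rw [Nat.card_Ioc]
  have htermbound : ∀ n ∈ Ioc (M+1) N,
      (∏ i ∈ Icc 1 (n - 1), (1 - (i:ℝ)/N)) * (1/(n:ℝ))
        ≤ r ^ (n - (M+2)) * (1/((M:ℝ)+2)) := by
    intro n hn
    simp only [mem_Ioc] at hn
    have hpsplit : (∏ i ∈ Icc 1 (n - 1), (1 - (i:ℝ)/N))
        = (∏ i ∈ Ioc 0 (M+1), (1 - (i:ℝ)/N)) * (∏ i ∈ Ioc (M+1) (n-1), (1 - (i:ℝ)/N)) := by
      rw [Finset.prod_Ioc_consecutive _ (Nat.zero_le _) (by omega : M + 1 ≤ n - 1)]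
      congr 1
    have hA0 : 0 ≤ ∏ i ∈ Ioc 0 (M+1), (1 - (i:ℝ)/N) := by
      apply Finset.prod_nonneg
      intro i hi; simp only [mem_Ioc] at hi; exact hfac0 i (by omega)
    have hA1 : ∏ i ∈ Ioc 0 (M+1), (1 - (i:ℝ)/N) ≤ 1 := by
      apply Finset.prod_le_one
      · intro i hi; simp only [mem_Ioc] at hi; exact hfac0 i (by omega)
      · intro i _; exact hfac1 i
    have hB0 : 0 ≤ ∏ i ∈ Ioc (M+1) (n-1), (1 - (i:ℝ)/N) := by
      apply Finset.prod_nonneg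
      intro i hi; simp only [mem_Ioc] at hi; exact hfac0 i (by omega)
    have hBr : ∏ i ∈ Ioc (M+1) (n-1), (1 - (i:ℝ)/N) ≤ r ^ (n - (M+2)) := by
      rw [show n - (M+2) = n - 1 - (M+1) by omega, ← hcard n, ← Finset.prod_const]
      apply Finset.prod_le_prod
      · intro i hi; simp only [mem_Ioc] at hi; exact hfac0 i (by omega)
      · intro i hi
        simp only [mem_Ioc] at hi
        rw [hrdef]
        have hle : ((M:ℝ)+1)/N ≤ (i:ℝ)/N := by
          gcongr
          exact_mod_cast (by omega : M + 1 ≤ i)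
        linarith
    have hp : (∏ i ∈ Icc 1 (n - 1), (1 - (i:ℝ)/N)) ≤ r ^ (n - (M+2)) := by
      rw [hpsplit]
      exact le_trans (mul_le_of_le_one_left hB0 hA1) hBr
    have h1n : (1:ℝ)/(n:ℝ) ≤ 1/((M:ℝ)+2) := by
      apply one_div_le_one_div_of_le (by positivity)
      exact_mod_cast (by omega : M + 2 ≤ n)
    exact mul_le_mul hp h1n (by positivity) (pow_nonneg hr0 _)
  have hgeom : (∑ n ∈ Ioc (M+1) N, r ^ (n - (M+2))) ≤ 1/(1-r) := by
    rw [show (Ioc (M+1) N : Finset ℕ) = Ico (M+2) (N+1) by ext x; simp; omega,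
      Finset.sum_Ico_eq_sum_range]
    rw [Finset.sum_congr rfl (fun k _ => by rw [show M+2+k-(M+2) = k by omega] :
      ∀ k ∈ range (N+1-(M+2)), r ^ (M+2+k-(M+2)) = r ^ k)]
    rw [geom_sum_eq (ne_of_lt hr1)]
    rw [show (r^(N+1-(M+2)) - 1)/(r-1) = (1 - r^(N+1-(M+2)))/(1-r) by
      rw [div_eq_div_iff (by linarith : r - 1 < 0).ne (ne_of_gt h1rpos)]; ring]
    rw [div_le_div_iff_of_pos_right h1rpos]
    have := pow_nonneg hr0 (N+1-(M+2))
    linarith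
  have hpart2 : (∑ n ∈ Ioc (M+1) N, (∏ i ∈ Icc 1 (n - 1), (1 - (i:ℝ)/N)) * (1/(n:ℝ))) ≤ 1 := by
    calc (∑ n ∈ Ioc (M+1) N, (∏ i ∈ Icc 1 (n - 1), (1 - (i:ℝ)/N)) * (1/(n:ℝ)))
        ≤ ∑ n ∈ Ioc (M+1) N, r ^ (n - (M+2)) * (1/((M:ℝ)+2)) :=
          Finset.sum_le_sum htermbound
      _ = (∑ n ∈ Ioc (M+1) N, r ^ (n - (M+2))) * (1/((M:ℝ)+2)) := by rw [← Finset.sum_mul]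
      _ ≤ (1/(1-r)) * (1/((M:ℝ)+2)) :=
          mul_le_mul_of_nonneg_right hgeom (by positivity)
      _ = (N:ℝ) / (((M:ℝ)+1) * ((M:ℝ)+2)) := by
          rw [h1r, one_div_div]
          field_simp
      _ ≤ 1 := by
          rw [div_le_one (by positivity)]
          nlinarith [hNsq]
  linarith [hsplit, hpart1, hpart2]

lemma S_lower (k N : ℕ) (hk : 1 ≤ k) (hN : 4 ≤ N) :
    (1 - 1/(k:ℝ)^2) * ((1/2) * Real.log N - Real.log (2*(k:ℝ)))
      ≤ ∑ n ∈ Icc 1 N, (∏ i ∈ Icc 1 (n - 1), (1 - (i : ℝ) / N)) * (1 / (n:ℝ)) := by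
  set M := Nat.sqrt N / k with hMdef
  have hMsqrt : M ≤ Nat.sqrt N := Nat.div_le_self _ _
  have hMN : M ≤ N := le_trans hMsqrt (Nat.sqrt_le_self N)
  have hNpos : (0:ℝ) < N := by exact_mod_cast (by omega : 0 < N)
  have hkpos : (0:ℝ) < k := by exact_mod_cast hk
  have hk1 : (1:ℝ) ≤ k := by exact_mod_cast hk
  have hk2 : 1 ≤ (k:ℝ)^2 := by nlinarith
  have hck : 0 ≤ 1 - 1/(k:ℝ)^2 := by
    have : 1/(k:ℝ)^2 ≤ 1 := by
      rw [div_le_one (by positivity)]; exact hk2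
    linarith
  have hMkN : ((M:ℝ) * k)^2 ≤ N := by
    have h1 : M * k ≤ Nat.sqrt N := Nat.div_mul_le_self _ _
    have h2 : (M * k)^2 ≤ (Nat.sqrt N)^2 := Nat.pow_le_pow_left h1 2
    have h3 : (M * k)^2 ≤ N := le_trans h2 (Nat.sqrt_le' N)
    exact_mod_cast h3
  have hM2N : (M:ℝ)^2 / N ≤ 1/(k:ℝ)^2 := by
    rw [div_le_div_iff₀ hNpos (by positivity)]
    nlinarith
  have hfac0 : ∀ i : ℕ, i ≤ N → 0 ≤ 1 - (i:ℝ)/N := by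
    intro i hi
    have h1 : (i:ℝ) ≤ N := by exact_mod_cast hi
    have h2 : (i:ℝ)/N ≤ 1 := div_le_one_of_le₀ h1 hNpos.le
    linarith
  -- per-term lower bound
  have hterm : ∀ n ∈ Icc 1 M, 1 - 1/(k:ℝ)^2 ≤ ∏ i ∈ Icc 1 (n-1), (1 - (i:ℝ)/N) := by
    intro n hn
    simp only [mem_Icc] at hn
    have hsum : ∑ i ∈ Icc 1 (n-1), (i:ℝ)/N ≤ 1/(k:ℝ)^2 := by
      have hb : ∀ i ∈ Icc 1 (n-1), (i:ℝ)/N ≤ (M:ℝ)/N := by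
        intro i hi
        simp only [mem_Icc] at hi
        gcongr
        exact_mod_cast (by omega : i ≤ M)
      have hcard : (Icc 1 (n-1)).card = n - 1 := by rw [Nat.card_Icc]; omega
      have := Finset.sum_le_card_nsmul _ _ _ hb
      rw [hcard, nsmul_eq_mul] at this
      have hle : ((n-1:ℕ):ℝ) * ((M:ℝ)/N) ≤ (M:ℝ)^2/N := by
        have h1 : ((n-1:ℕ):ℝ) ≤ (M:ℝ) := by exact_mod_cast (by omega : n - 1 ≤ M)
        have h2 : 0 ≤ (M:ℝ)/N := by positivity
        have e : (M:ℝ)^2/N = M * ((M:ℝ)/N) := by ring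
        rw [e]
        nlinarith
      linarith [hM2N]
    have hber := bernoulli_prod (Icc 1 (n-1)) (fun i => (i:ℝ)/N)
      (fun i _ => by positivity)
      (fun i hi => by
        simp only [mem_Icc] at hi
        have h1 : (i:ℝ) ≤ N := by exact_mod_cast (by omega : i ≤ N)
        exact div_le_one_of_le₀ h1 hNpos.le)
    linarith
  -- subset
  have hsubset : (∑ n ∈ Icc 1 M, (∏ i ∈ Icc 1 (n - 1), (1 - (i:ℝ)/N)) * (1/(n:ℝ)))
      ≤ ∑ n ∈ Icc 1 N, (∏ i ∈ Icc 1 (n - 1), (1 - (i:ℝ)/N)) * (1/(n:ℝ)) := by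
    apply Finset.sum_le_sum_of_subset_of_nonneg (Finset.Icc_subset_Icc_right hMN)
    intro n hn _
    simp only [mem_Icc] at hn
    have h0 : 0 ≤ ∏ i ∈ Icc 1 (n-1), (1 - (i:ℝ)/N) := by
      apply Finset.prod_nonneg
      intro i hi
      simp only [mem_Icc] at hi
      exact hfac0 i (by omega)
    positivity
  -- harmonic part
  have hstep : (1 - 1/(k:ℝ)^2) * Real.log ((M:ℝ) + 1)
      ≤ ∑ n ∈ Icc 1 M, (∏ i ∈ Icc 1 (n - 1), (1 - (i:ℝ)/N)) * (1/(n:ℝ)) := by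
    calc (1 - 1/(k:ℝ)^2) * Real.log ((M:ℝ) + 1)
        ≤ (1 - 1/(k:ℝ)^2) * ∑ n ∈ Icc 1 M, (1:ℝ)/n :=
          mul_le_mul_of_nonneg_left (harmonic_lower M) hck
      _ = ∑ n ∈ Icc 1 M, (1 - 1/(k:ℝ)^2) * ((1:ℝ)/n) := Finset.mul_sum _ _ _
      _ ≤ ∑ n ∈ Icc 1 M, (∏ i ∈ Icc 1 (n - 1), (1 - (i:ℝ)/N)) * (1/(n:ℝ)) := by
          apply Finset.sum_le_sum
          intro n hn
          exact mul_le_mul_of_nonneg_right (hterm n hn) (by positivity)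
  -- log (M+1) lower bound
  have hlog : (1/2) * Real.log N - Real.log (2*(k:ℝ)) ≤ Real.log ((M:ℝ) + 1) := by
    have hs : Real.sqrt N < (Nat.sqrt N : ℝ) + 1 := by
      rw [Real.sqrt_lt' (by positivity)]
      exact_mod_cast Nat.lt_succ_sqrt' N
    have hkM : (Nat.sqrt N : ℝ) < (k:ℝ) * ((M:ℝ) + 1) := by
      have hd := Nat.div_add_mod (Nat.sqrt N) k
      rw [← hMdef] at hd
      have hm := Nat.mod_lt (Nat.sqrt N) (show 0 < k by omega)
      have : Nat.sqrt N < k * (M + 1) := by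
        have : k * (M + 1) = k * M + k := by ring
        omega
      exact_mod_cast this
    have hsqrtge2 : 2 ≤ Real.sqrt N := by
      rw [show (2:ℝ) = Real.sqrt 4 by rw [show (4:ℝ) = 2^2 by norm_num, Real.sqrt_sq]; norm_num]
      exact Real.sqrt_le_sqrt (by exact_mod_cast hN)
    have hM1 : Real.sqrt N / (2*(k:ℝ)) ≤ (M:ℝ) + 1 := by
      rw [div_le_iff₀ (by positivity)]
      nlinarith
    have hpos : 0 < Real.sqrt N / (2*(k:ℝ)) := by
      have : 0 < Real.sqrt N := by linarith
      positivity
    have := Real.log_le_log hpos hM1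
    rw [Real.log_div (by linarith : Real.sqrt N ≠ 0) (by positivity : (2*(k:ℝ)) ≠ 0),
      Real.log_sqrt hNpos.le] at this
    linarith
  calc (1 - 1/(k:ℝ)^2) * ((1/2) * Real.log N - Real.log (2*(k:ℝ)))
      ≤ (1 - 1/(k:ℝ)^2) * Real.log ((M:ℝ) + 1) := mul_le_mul_of_nonneg_left hlog hck
    _ ≤ _ := le_trans hstep hsubset

theorem stmt_9 :
    Filter.Tendsto
      (fun N : ℕ =>
        (∑ n ∈ Finset.Icc 1 N,
          (∏ i ∈ Finset.Icc 1 (n - 1), (1 - (i : ℝ) / N)) * (1 / (n : ℝ))) /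
          ((1 / 2) * Real.log N))
      Filter.atTop (nhds 1) := by
  have hL : Tendsto (fun N : ℕ => (1/2) * Real.log N) atTop atTop :=
    Tendsto.const_mul_atTop (by norm_num : (0:ℝ) < 1/2)
      (Real.tendsto_log_atTop.comp tendsto_natCast_atTop_atTop)
  rw [tendsto_order]
  constructor
  · intro a ha
    have ha1 : 0 < 1 - a := by linarith
    obtain ⟨k, hk⟩ := exists_nat_gt (2/(1-a))
    have hk0 : (0:ℝ) < k := lt_trans (by positivity) hk
    have hk1 : 1 ≤ k := by exact_mod_cast Nat.one_le_iff_ne_zero.mpr (by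
      intro h; rw [h] at hk0; norm_num at hk0)
    have hk1' : (1:ℝ) ≤ k := by exact_mod_cast hk1
    have hinvk : 1/(k:ℝ) < (1-a)/2 := by
      rw [div_lt_div_iff₀ hk0 (by norm_num)]
      rw [div_lt_iff₀ ha1] at hk
      linarith
    have hinvk2 : 1/(k:ℝ)^2 ≤ 1/(k:ℝ) := by
      apply one_div_le_one_div_of_le hk0
      nlinarith
    set c : ℝ := 1 - 1/(k:ℝ)^2 with hcdef
    have hc_gt : a < c := by rw [hcdef]; linarith
    have hc0 : 0 ≤ c := by
      rw [hcdef]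
      have : 1/(k:ℝ)^2 ≤ 1 := by
        apply div_le_one_of_le₀ _ (by positivity)
        nlinarith
      linarith
    have hd : Tendsto (fun N : ℕ => Real.log (2*(k:ℝ)) / ((1/2) * Real.log N))
        atTop (nhds 0) := Tendsto.div_atTop tendsto_const_nhds hL
    have hg : Tendsto (fun N : ℕ => c * (1 - Real.log (2*(k:ℝ)) / ((1/2)*Real.log N)))
        atTop (nhds c) := by
      have := tendsto_const_nhds (x := c) (f := atTop (α := ℕ)) |>.mul
        ((tendsto_const_nhds (x := (1:ℝ))).sub hd)
      simpa using this
    have hev1 := hg.eventually_const_lt hc_gt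
    have hev2 : ∀ᶠ N : ℕ in atTop, 0 < (1/2) * Real.log (N:ℝ) :=
      hL.eventually (eventually_gt_atTop 0)
    filter_upwards [hev1, hev2, eventually_ge_atTop 4] with N h1 h2 h3
    have hS := S_lower k N hk1 h3
    have hdiv : c * ((1/2) * Real.log N - Real.log (2*(k:ℝ))) / ((1/2)*Real.log N)
        ≤ (∑ n ∈ Icc 1 N, (∏ i ∈ Icc 1 (n - 1), (1 - (i : ℝ) / N)) * (1 / (n:ℝ)))
          / ((1/2)*Real.log N) := by
      exact div_le_div_of_nonneg_right hS h2.le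
    have heq : c * ((1/2) * Real.log N - Real.log (2*(k:ℝ))) / ((1/2)*Real.log N)
        = c * (1 - Real.log (2*(k:ℝ)) / ((1/2)*Real.log N)) := by
      rw [mul_div_assoc, sub_div, div_self (ne_of_gt h2)]
    rw [heq] at hdiv
    exact lt_of_lt_of_le h1 hdiv
  · intro b hb
    have h3' : Tendsto (fun N : ℕ => 3/((1/2)*Real.log N)) atTop (nhds 0) :=
      Tendsto.div_atTop tendsto_const_nhds hL
    have hg : Tendsto (fun N : ℕ => 1 + 3/((1/2)*Real.log N)) atTop (nhds 1) := by
      have := tendsto_const_nhds (x := (1:ℝ)) (f := atTop (α := ℕ)) |>.add h3'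
      simpa using this
    have hev1 := hg.eventually_lt_const hb
    have hev2 : ∀ᶠ N : ℕ in atTop, 0 < (1/2) * Real.log (N:ℝ) :=
      hL.eventually (eventually_gt_atTop 0)
    filter_upwards [hev1, hev2, eventually_ge_atTop 2] with N h1 h2 h3
    have hS := S_upper N h3
    have hlog2 : Real.log 2 ≤ 1 := by
      have := Real.log_le_sub_one_of_pos (by norm_num : (0:ℝ) < 2)
      linarith
    have hS3 : (∑ n ∈ Icc 1 N, (∏ i ∈ Icc 1 (n - 1), (1 - (i : ℝ) / N)) * (1 / (n:ℝ)))
        ≤ (1/2)*Real.log N + 3 := by linarith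
    have hdiv : (∑ n ∈ Icc 1 N, (∏ i ∈ Icc 1 (n - 1), (1 - (i : ℝ) / N)) * (1 / (n:ℝ)))
          / ((1/2)*Real.log N) ≤ ((1/2)*Real.log N + 3) / ((1/2)*Real.log N) :=
      div_le_div_of_nonneg_right hS3 h2.le
    have heq : ((1/2)*Real.log N + 3) / ((1/2)*Real.log N) = 1 + 3/((1/2)*Real.log N) := by
      rw [add_div, div_self (ne_of_gt h2)]
    rw [heq] at hdiv
    exact lt_of_le_of_lt hdiv h1
end

section
/- For fixed λ > 1, the expected duration T_N := ∑_{n=1}^N (N-1)!/(n·(N-n)!)·(λ/N)^{n-1} of the supercritical SIS epidemic satisfies lim_{N→∞} T_N / ( (√(2π)/(λ-1)) · exp((log λ - 1 + 1/λ)·N) / √N ) = 1. -/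
set_option maxHeartbeats 2000000

open Finset Filter Real Nat


lemma exp_tsum (x : ℝ) : Real.exp x = ∑' n : ℕ, x ^ n / n ! := by
  rw [Real.exp_eq_exp_ℝ, NormedSpace.exp_eq_tsum_div]

lemma shift_eq (μ : ℝ) (k i : ℕ) :
    (((i + k).descFactorial k : ℝ)) * μ ^ (i + k) / (i + k)! = μ ^ k * (μ ^ i / i !) := by
  have h := Nat.factorial_mul_descFactorial (Nat.le_add_left k i)
  rw [Nat.add_sub_cancel] at h
  have h' : ((i ! : ℝ)) * ((i + k).descFactorial k : ℝ) = ((i + k)! : ℝ) := by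
    exact_mod_cast congrArg (Nat.cast (R := ℝ)) h
  have hi : (i ! : ℝ) ≠ 0 := by positivity
  have hik : ((i + k)! : ℝ) ≠ 0 := by positivity
  field_simp at h' ⊢
  rw [pow_add, ← h']
  ring

lemma fk_summable (μ : ℝ) (k : ℕ) :
    Summable (fun j : ℕ => ((j.descFactorial k : ℝ)) * μ ^ j / j !) := by
  rw [← summable_nat_add_iff k]
  simp only [shift_eq]
  exact (Real.summable_pow_div_factorial μ).mul_left _

lemma fk_hasSum (μ : ℝ) (k : ℕ) :
    HasSum (fun j : ℕ => ((j.descFactorial k : ℝ)) * μ ^ j / j !) (μ ^ k * Real.exp μ) := by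
  refine (fk_summable μ k).hasSum_iff.mpr ?_
  rw [← Summable.sum_add_tsum_nat_add k (fk_summable μ k)]
  have h0 : ∀ i ∈ Finset.range k, ((i.descFactorial k : ℝ)) * μ ^ i / i ! = 0 := by
    intro i hi
    rw [Nat.descFactorial_eq_zero_iff_lt.mpr (Finset.mem_range.mp hi)]
    simp
  rw [Finset.sum_eq_zero h0, zero_add]
  simp only [shift_eq]
  rw [tsum_mul_left, ← exp_tsum]

lemma pt (μ : ℝ) (j : ℕ) :
    ((j : ℝ) - μ) ^ 4 =
      (j.descFactorial 4 : ℝ) + (6 - 4*μ) * (j.descFactorial 3 : ℝ)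
        + (6*μ^2 - 12*μ + 7) * (j.descFactorial 2 : ℝ)
        + (-4*μ^3 + 6*μ^2 - 4*μ + 1) * (j.descFactorial 1 : ℝ) + μ^4 := by
  obtain _|_|_|_|m := j
  · norm_num [Nat.descFactorial]
  · norm_num [Nat.descFactorial]; ring
  · norm_num [Nat.descFactorial]; ring
  · norm_num [Nat.descFactorial]; ring
  · have h1 : (m+4).descFactorial 1 = m+4 := Nat.descFactorial_one _
    have h2 : (m+4).descFactorial 2 = (m+3)*(m+4) := by
      simp [Nat.descFactorial_succ, Nat.descFactorial_one, Nat.mul_comm]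
    have h3 : (m+4).descFactorial 3 = (m+2)*((m+3)*(m+4)) := by
      simp [Nat.descFactorial_succ, Nat.mul_comm, Nat.mul_left_comm]
    have h4 : (m+4).descFactorial 4 = (m+1)*((m+2)*((m+3)*(m+4))) := by
      simp [Nat.descFactorial_succ, Nat.mul_comm, Nat.mul_left_comm]
    rw [h1, h2, h3, h4]
    push_cast
    ring

lemma V4_hasSum (μ : ℝ) :
    HasSum (fun j : ℕ => ((j : ℝ) - μ) ^ 4 * (μ ^ j / j !)) ((3*μ^2 + μ) * Real.exp μ) := by
  have h := (((fk_hasSum μ 4).add ((fk_hasSum μ 3).mul_left (6-4*μ))).add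
      ((fk_hasSum μ 2).mul_left (6*μ^2-12*μ+7))).add
      (((fk_hasSum μ 1).mul_left (-4*μ^3+6*μ^2-4*μ+1)).add ((fk_hasSum μ 0).mul_left (μ^4)))
  convert h using 1
  · funext j
    rw [pt μ j]
    simp only [Nat.descFactorial_zero, Nat.cast_one]
    ring
  · ring

lemma Q_hasSum (μ : ℝ) : HasSum (fun j : ℕ => μ ^ j / j !) (Real.exp μ) := by
  have h := fk_hasSum μ 0
  simpa using h

lemma Q_nonneg {μ : ℝ} (hμ : 0 ≤ μ) (j : ℕ) : 0 ≤ μ ^ j / (j ! : ℝ) := by positivity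

lemma V4_term_nonneg {μ : ℝ} (hμ : 0 ≤ μ) (j : ℕ) :
    0 ≤ ((j : ℝ) - μ) ^ 4 * (μ ^ j / j !) := by positivity

lemma cheb_range {μ : ℝ} (hμ : 0 ≤ μ) (N : ℕ) :
    ∑ j ∈ Finset.range N, ((j : ℝ) - μ) ^ 4 * (μ ^ j / j !) ≤ (3*μ^2 + μ) * Real.exp μ := by
  rw [← (V4_hasSum μ).tsum_eq]
  exact Summable.sum_le_tsum _ (fun j _ => V4_term_nonneg hμ j) (V4_hasSum μ).summable

lemma sum_Q_le {μ : ℝ} (hμ : 0 ≤ μ) (N : ℕ) :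
    ∑ j ∈ Finset.range N, μ ^ j / (j ! : ℝ) ≤ Real.exp μ := by
  rw [← (Q_hasSum μ).tsum_eq]
  exact Summable.sum_le_tsum _ (fun j _ => Q_nonneg hμ j) (Q_hasSum μ).summable

lemma tail_mass {μ : ℝ} (hμ : 0 ≤ μ) {N : ℕ} (hN : μ < N) :
    Real.exp μ - ∑ j ∈ Finset.range N, μ ^ j / (j ! : ℝ)
      ≤ (3*μ^2 + μ) * Real.exp μ / ((N : ℝ) - μ) ^ 4 := by
  have hQ := (Q_hasSum μ).summable
  have hs := Summable.sum_add_tsum_nat_add (f := fun j : ℕ => μ ^ j / (j ! : ℝ)) N hQ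
  rw [(Q_hasSum μ).tsum_eq] at hs
  have hNμ : (0:ℝ) < (N : ℝ) - μ := by linarith
  have key : ∑' i : ℕ, μ ^ (i + N) / ((i + N)! : ℝ)
      ≤ (3*μ^2 + μ) * Real.exp μ / ((N : ℝ) - μ) ^ 4 := by
    have hV := (V4_hasSum μ).summable
    have hVs : Summable (fun i : ℕ => (((i + N : ℕ) : ℝ) - μ) ^ 4 * (μ ^ (i + N) / (i + N)!)) := by
      exact_mod_cast (summable_nat_add_iff N).mpr hV
    have step1 : ∑' i : ℕ, μ ^ (i + N) / ((i + N)! : ℝ)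
        ≤ ∑' i : ℕ, ((((i + N : ℕ) : ℝ) - μ) / ((N : ℝ) - μ)) ^ 4 * (μ ^ (i + N) / (i + N)!) := by
      refine Summable.tsum_le_tsum (fun i => ?_) ((summable_nat_add_iff N).mpr hQ) ?_
      · have h1 : (1:ℝ) ≤ ((((i + N : ℕ) : ℝ) - μ) / ((N : ℝ) - μ)) ^ 4 := by
          have : (1:ℝ) ≤ (((i + N : ℕ) : ℝ) - μ) / ((N : ℝ) - μ) := by
            rw [le_div_iff₀ hNμ]
            push_cast
            linarith [Nat.cast_nonneg (α := ℝ) i]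
          calc (1:ℝ) = 1 ^ 4 := by norm_num
          _ ≤ _ := pow_le_pow_left₀ (by norm_num) this 4
        nlinarith [Q_nonneg hμ (i + N), h1]
      · have : (fun i : ℕ => ((((i + N : ℕ) : ℝ) - μ) / ((N : ℝ) - μ)) ^ 4 * (μ ^ (i + N) / (i + N)!))
            = fun i : ℕ => (((N : ℝ) - μ) ^ 4)⁻¹ * ((((i + N : ℕ) : ℝ) - μ) ^ 4 * (μ ^ (i + N) / (i + N)!)) := by
          funext i; rw [div_pow]; ring
        rw [this]
        exact hVs.mul_left _
    have step2 : ∑' i : ℕ, ((((i + N : ℕ) : ℝ) - μ) / ((N : ℝ) - μ)) ^ 4 * (μ ^ (i + N) / (i + N)!)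
        ≤ (3*μ^2 + μ) * Real.exp μ / ((N : ℝ) - μ) ^ 4 := by
      have heq : ∀ i : ℕ, ((((i + N : ℕ) : ℝ) - μ) / ((N : ℝ) - μ)) ^ 4 * (μ ^ (i + N) / (i + N)!)
          = (((N : ℝ) - μ) ^ 4)⁻¹ * ((((i + N : ℕ) : ℝ) - μ) ^ 4 * (μ ^ (i + N) / (i + N)!)) := by
        intro i; rw [div_pow]; ring
      simp only [heq]
      rw [tsum_mul_left, div_eq_inv_mul]
      refine mul_le_mul_of_nonneg_left ?_ (by positivity)
      have hs4 := Summable.sum_add_tsum_nat_add (f := fun j : ℕ => ((j : ℝ) - μ) ^ 4 * (μ ^ j / j !)) N hV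
      rw [(V4_hasSum μ).tsum_eq] at hs4
      have hpos : 0 ≤ ∑ j ∈ Finset.range N, ((j : ℝ) - μ) ^ 4 * (μ ^ j / j !) :=
        Finset.sum_nonneg (fun j _ => V4_term_nonneg hμ j)
      push_cast at hs4 ⊢
      linarith
    linarith
  push_cast at hs key ⊢
  linarith

lemma claimA (l : ℝ) (hl : 1 < l) :
    Tendsto (fun N : ℕ => Real.exp (-((N:ℝ)/l)) *
        ∑ j ∈ Finset.range N, (N:ℝ) * (((N:ℝ)/l) ^ j / (((N:ℝ) - (j:ℝ)) * (j ! : ℝ))))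
      atTop (nhds (l/(l-1))) := by
  have hl0 : (0:ℝ) < l := by linarith
  set c : ℝ := 1/l with hc
  have hc0 : 0 < c := by positivity
  have hc1 : c < 1 := by rw [hc, div_lt_one hl0]; linarith
  set L : ℝ := l/(l-1) with hLdef
  have hl1 : l - 1 ≠ 0 := by linarith
  have hlne : l ≠ 0 := by linarith
  have hL : L * (1 - c) = 1 := by rw [hLdef, hc]; field_simp
  have h1c : 0 < 1 - c := by linarith
  have hL0 : 0 < L := by
    rcases lt_trichotomy L 0 with h | h | h
    · exfalso; nlinarith only [hL, h1c, h]
    · exfalso; rw [h, zero_mul] at hL; norm_num at hL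
    · exact h
  have hL1 : 1 < L := by nlinarith only [hL, hL0, h1c, hc0]
  rw [Metric.tendsto_atTop]
  intro δ hδ
  set δ' : ℝ := min (δ/2) 1 with hδ'
  have hδ'0 : 0 < δ' := lt_min (by linarith) one_pos
  have hδ'1 : δ' ≤ 1 := min_le_right _ _
  have hδ'δ : δ' ≤ δ/2 := min_le_left _ _
  set ε : ℝ := min ((1-c)/2) (δ'*(1-c)^2/8) with hε
  have hε0 : 0 < ε :=
    lt_min (by linarith) (div_pos (mul_pos hδ'0 (pow_pos h1c 2)) (by norm_num))
  have hε1 : ε ≤ (1-c)/2 := min_le_left _ _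
  have hε2 : ε ≤ δ'*(1-c)^2/8 := min_le_right _ _
  have h1cε : 0 < 1 - c - ε := by linarith
  have hLε : L * ε ≤ δ' * (1-c) / 8 := by
    have b1 : L * ε ≤ L * (δ'*(1-c)^2/8) := mul_le_mul_of_nonneg_left hε2 hL0.le
    have b2 : L * (δ'*(1-c)^2/8) = (L*(1-c)) * (δ'*(1-c)/8) := by ring
    rw [b2, hL, one_mul] at b1
    linarith only [b1]
  have hub : 1/(1-c-ε) ≤ L + δ'/2 := by
    rw [div_le_iff₀ h1cε]
    have hm : δ'*((1-c)/2) ≤ δ'*(1-c-ε) := mul_le_mul_of_nonneg_left (by linarith) hδ'0.le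
    nlinarith only [hL, hLε, hm]
  have hlb : L - δ'/2 ≤ 1/(1-c+ε) := by
    rw [le_div_iff₀ (by linarith)]
    have hδc : 0 ≤ δ'*(1-c) := mul_nonneg hδ'0.le h1c.le
    have hδε : 0 ≤ δ'*ε := mul_nonneg hδ'0.le hε0.le
    nlinarith only [hL, hLε, hδc, hδε]
  have hε4 : (0:ℝ) < ε^4 := pow_pos hε0 4
  have h1c4 : (0:ℝ) < (1-c)^4 := pow_pos h1c 4
  obtain ⟨N₀, hN₀⟩ := exists_nat_gt (max (max (8/(ε^4*δ')) ((4*L/ε^4 + 4*L/(1-c)^4)*(2/δ'))) 1)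
  refine ⟨N₀, fun N hN => ?_⟩
  have hNN₀ : (N₀:ℝ) ≤ N := by exact_mod_cast hN
  have hNR : max (max (8/(ε^4*δ')) ((4*L/ε^4 + 4*L/(1-c)^4)*(2/δ'))) 1 < (N:ℝ) :=
    lt_of_lt_of_le hN₀ hNN₀
  have hN1 : (1:ℝ) ≤ N := le_of_lt (lt_of_le_of_lt (le_max_right _ _) hNR)
  have hNpos : (0:ℝ) < N := by linarith
  have hRN1 : 8/(ε^4*δ') < (N:ℝ) :=
    lt_of_le_of_lt (le_trans (le_max_left _ _) (le_max_left _ _)) hNR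
  have hRN2 : (4*L/ε^4 + 4*L/(1-c)^4)*(2/δ') < (N:ℝ) :=
    lt_of_le_of_lt (le_trans (le_max_right _ _) (le_max_left _ _)) hNR
  have hμeq : (N:ℝ)/l = c*(N:ℝ) := by rw [hc]; ring
  show dist (Real.exp (-((N:ℝ)/l)) *
      ∑ j ∈ Finset.range N, (N:ℝ) * (((N:ℝ)/l) ^ j / (((N:ℝ) - (j:ℝ)) * (j ! : ℝ)))) L < δ
  rw [hμeq]
  have hμ0 : (0:ℝ) ≤ c*N := (mul_pos hc0 hNpos).le
  have hμN : c*(N:ℝ) < N := by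
    calc c*(N:ℝ) < 1*N := mul_lt_mul_of_pos_right hc1 hNpos
    _ = N := one_mul _
  set t : ℝ := ε*N with htdef
  have ht : 0 < t := by rw [htdef]; exact mul_pos hε0 hNpos
  have ht4 : (0:ℝ) < t^4 := pow_pos ht 4
  set M : ℝ := 3*(c*N)^2 + c*N with hM
  have hM4 : M ≤ 4*(N:ℝ)^2 := by
    have b1 : (c*(N:ℝ))^2 ≤ (N:ℝ)^2 := by
      have := pow_le_pow_left₀ hμ0 hμN.le 2
      simpa using this
    have b2 : (N:ℝ)*1 ≤ (N:ℝ)*N := mul_le_mul_of_nonneg_left hN1 hNpos.le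
    rw [hM]
    nlinarith only [b1, b2, hμN]
  have hM0 : 0 ≤ M := by
    rw [hM]
    have := sq_nonneg (c*(N:ℝ))
    nlinarith only [this, hμ0]
  have hQpos : ∀ j : ℕ, (0:ℝ) ≤ (c*N) ^ j / (j ! : ℝ) :=
    fun j => div_nonneg (pow_nonneg hμ0 j) (Nat.cast_nonneg _)
  -- basic sum facts
  have hSQ_le := sum_Q_le hμ0 N
  have hSQ_ge := tail_mass hμ0 hμN
  have hC := cheb_range hμ0 N
  have hexp : (0:ℝ) < Real.exp (-(c*N)) := Real.exp_pos _
  have hexpmul : Real.exp (-(c*N)) * Real.exp (c*N) = 1 := by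
    rw [← Real.exp_add]; simp
  -- pointwise term rewriting
  have hterm : ∀ j ∈ Finset.range N,
      (N:ℝ) * ((c*N) ^ j / (((N:ℝ) - (j:ℝ)) * (j ! : ℝ)))
        = ((N:ℝ)/((N:ℝ)-(j:ℝ))) * ((c*N) ^ j / (j ! : ℝ)) := by
    intro j hj
    have hjN : (j:ℝ) + 1 ≤ N := by exact_mod_cast Finset.mem_range.mp hj
    have hNj0 : (0:ℝ) < (N:ℝ)-(j:ℝ) := by linarith
    have hf : ((j ! : ℝ)) ≠ 0 := Nat.cast_ne_zero.mpr (Nat.factorial_ne_zero j)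
    field_simp
  have up_pt : ∀ j ∈ Finset.range N,
      ((N:ℝ)/((N:ℝ)-(j:ℝ))) * ((c*N) ^ j / (j ! : ℝ))
        ≤ ((L+δ'/2) + (N:ℝ)*((((j:ℝ)-c*N)/t)^4)) * ((c*N) ^ j / (j ! : ℝ)) := by
    intro j hj
    have hjN : (j:ℝ) + 1 ≤ N := by exact_mod_cast Finset.mem_range.mp hj
    have hNj0 : (0:ℝ) < (N:ℝ)-(j:ℝ) := by linarith
    have hNj1 : (1:ℝ) ≤ (N:ℝ)-(j:ℝ) := by linarith
    refine mul_le_mul_of_nonneg_right ?_ (hQpos j)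
    have hq4 : (0:ℝ) ≤ (((j:ℝ)-c*N)/t)^4 := by positivity
    by_cases hcase : (j:ℝ) < (c+ε)*N
    · have hexp1 : (c+ε)*(N:ℝ) = c*N + ε*N := by ring
      have hq : 0 ≤ (N:ℝ)*(((j:ℝ)-c*N)/t)^4 := mul_nonneg hNpos.le hq4
      have h2 : (N:ℝ)/((N:ℝ)-(j:ℝ)) ≤ 1/(1-c-ε) := by
        rw [div_le_div_iff₀ hNj0 h1cε]
        nlinarith only [hcase, hexp1]
      linarith only [h2, hub, hq]
    · push_neg at hcase
      have hexp1 : (c+ε)*(N:ℝ) = c*N + ε*N := by ring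
      have h3 : t ≤ (j:ℝ) - c*N := by rw [htdef]; linarith only [hcase, hexp1]
      have h5 : (1:ℝ) ≤ ((j:ℝ)-c*N)/t := by rw [le_div_iff₀ ht]; linarith only [h3]
      have h4 : (1:ℝ) ≤ (((j:ℝ)-c*N)/t)^4 := by
        calc (1:ℝ) = 1^4 := by norm_num
        _ ≤ _ := pow_le_pow_left₀ (by norm_num) h5 4
      have h6 : (N:ℝ)/((N:ℝ)-(j:ℝ)) ≤ N := by
        rw [div_le_iff₀ hNj0]
        have := mul_le_mul_of_nonneg_left hNj1 hNpos.le
        linarith only [this]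
      have h7 : (N:ℝ) ≤ (N:ℝ)*(((j:ℝ)-c*N)/t)^4 := by
        have := mul_le_mul_of_nonneg_left h4 hNpos.le
        rw [mul_one] at this
        exact this
      linarith only [h6, h7, hL0, hδ'0, hL1]
  have lo_pt : ∀ j ∈ Finset.range N,
      ((L-δ'/2) - (L-δ'/2)*((((j:ℝ)-c*N)/t)^4)) * ((c*N) ^ j / (j ! : ℝ))
        ≤ ((N:ℝ)/((N:ℝ)-(j:ℝ))) * ((c*N) ^ j / (j ! : ℝ)) := by
    intro j hj
    have hjN : (j:ℝ) + 1 ≤ N := by exact_mod_cast Finset.mem_range.mp hj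
    have hNj0 : (0:ℝ) < (N:ℝ)-(j:ℝ) := by linarith
    have hLδ : 0 < L - δ'/2 := by linarith only [hL1, hδ'1]
    refine mul_le_mul_of_nonneg_right ?_ (hQpos j)
    have hq4 : (0:ℝ) ≤ (((j:ℝ)-c*N)/t)^4 := by positivity
    by_cases hcase : (c-ε)*(N:ℝ) ≤ j
    · have hexp1 : (c-ε)*(N:ℝ) = c*N - ε*N := by ring
      have h2 : 1/(1-c+ε) ≤ (N:ℝ)/((N:ℝ)-(j:ℝ)) := by
        rw [div_le_div_iff₀ (by linarith) hNj0]
        nlinarith only [hcase, hexp1]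
      have hq : 0 ≤ (L-δ'/2)*((((j:ℝ)-c*N)/t)^4) := mul_nonneg hLδ.le hq4
      linarith only [h2, hlb, hq]
    · push_neg at hcase
      have hexp1 : (c-ε)*(N:ℝ) = c*N - ε*N := by ring
      have h3 : t ≤ c*N - (j:ℝ) := by rw [htdef]; linarith only [hcase, hexp1]
      have h5 : (1:ℝ) ≤ (c*N-(j:ℝ))/t := by rw [le_div_iff₀ ht]; linarith only [h3]
      have h4 : (1:ℝ) ≤ (((j:ℝ)-c*N)/t)^4 := by
        have heq : (((j:ℝ)-c*N)/t)^4 = ((c*N-(j:ℝ))/t)^4 := by ring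
        rw [heq]
        calc (1:ℝ) = 1^4 := by norm_num
        _ ≤ _ := pow_le_pow_left₀ (by norm_num) h5 4
      have hw : 0 ≤ (N:ℝ)/((N:ℝ)-(j:ℝ)) := div_nonneg hNpos.le hNj0.le
      have h9 : 0 ≤ (L-δ'/2)*((((j:ℝ)-c*N)/t)^4 - 1) :=
        mul_nonneg hLδ.le (by linarith only [h4])
      nlinarith only [hw, h9]
  -- sum splitting
  have hsplitA : ∀ A : ℝ, ∑ j ∈ Finset.range N,
      (A + (N:ℝ)*((((j:ℝ)-c*N)/t)^4)) * ((c*N) ^ j / (j ! : ℝ))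
      = A * (∑ j ∈ Finset.range N, (c*N) ^ j / (j ! : ℝ))
        + ((N:ℝ)/t^4) * (∑ j ∈ Finset.range N, ((j:ℝ)-c*N)^4 * ((c*N) ^ j / (j ! : ℝ))) := by
    intro A
    rw [Finset.mul_sum, Finset.mul_sum, ← Finset.sum_add_distrib]
    refine Finset.sum_congr rfl (fun j _ => ?_)
    have hf : ((j ! : ℝ)) ≠ 0 := Nat.cast_ne_zero.mpr (Nat.factorial_ne_zero j)
    field_simp
  have hsplitB : ∀ A : ℝ, ∑ j ∈ Finset.range N,
      (A - A*((((j:ℝ)-c*N)/t)^4)) * ((c*N) ^ j / (j ! : ℝ))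
      = A * (∑ j ∈ Finset.range N, (c*N) ^ j / (j ! : ℝ))
        - (A/t^4) * (∑ j ∈ Finset.range N, ((j:ℝ)-c*N)^4 * ((c*N) ^ j / (j ! : ℝ))) := by
    intro A
    rw [Finset.mul_sum, Finset.mul_sum, ← Finset.sum_sub_distrib]
    refine Finset.sum_congr rfl (fun j _ => ?_)
    have hf : ((j ! : ℝ)) ≠ 0 := Nat.cast_ne_zero.mpr (Nat.factorial_ne_zero j)
    field_simp
  set SQ : ℝ := ∑ j ∈ Finset.range N, (c*N) ^ j / (j ! : ℝ) with hSQ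
  set SC : ℝ := ∑ j ∈ Finset.range N, ((j:ℝ)-c*N)^4 * ((c*N) ^ j / (j ! : ℝ)) with hSC
  have hSQ0 : 0 ≤ SQ := Finset.sum_nonneg (fun j _ => hQpos j)
  have hSC0 : 0 ≤ SC := Finset.sum_nonneg (fun j _ => mul_nonneg (by positivity) (hQpos j))
  set X : ℝ := ∑ j ∈ Finset.range N, (N:ℝ) * ((c*N) ^ j / (((N:ℝ) - (j:ℝ)) * (j ! : ℝ))) with hX
  have hXw : X = ∑ j ∈ Finset.range N, ((N:ℝ)/((N:ℝ)-(j:ℝ))) * ((c*N) ^ j / (j ! : ℝ)) :=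
    Finset.sum_congr rfl hterm
  -- error bounds
  have hE1 : ((N:ℝ)/t^4) * M ≤ δ'/2 := by
    have ht4e : t^4 = ε^4 * (N:ℝ)^4 := by rw [htdef]; ring
    have b1 : ((N:ℝ)/t^4) * M ≤ ((N:ℝ)/t^4) * (4*(N:ℝ)^2) :=
      mul_le_mul_of_nonneg_left hM4 (div_nonneg hNpos.le ht4.le)
    have e1 : ((N:ℝ)/t^4) * (4*(N:ℝ)^2) = 4/(ε^4*(N:ℝ)) := by
      rw [ht4e]; field_simp
    have h2 : 8/(ε^4*δ') < (N:ℝ) := hRN1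
    have h3 : 4/(ε^4*(N:ℝ)) ≤ δ'/2 := by
      rw [div_le_div_iff₀ (mul_pos hε4 hNpos) two_pos]
      rw [div_lt_iff₀ (mul_pos hε4 hδ'0)] at h2
      nlinarith only [h2]
    linarith only [b1, e1, h3]
  have hE23 : L * (M/((N:ℝ)-c*N)^4 + M/t^4) ≤ δ'/2 := by
    have ht4e : t^4 = ε^4 * (N:ℝ)^4 := by rw [htdef]; ring
    have hNc4 : ((N:ℝ)-c*N)^4 = (1-c)^4*(N:ℝ)^4 := by ring
    have hN4 : (0:ℝ) < (N:ℝ)^4 := pow_pos hNpos 4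
    have hNN2 : (N:ℝ) ≤ (N:ℝ)^2 := by nlinarith only [hN1, hNpos]
    have b1 : M/((N:ℝ)-c*N)^4 ≤ (4*(N:ℝ)^2)/((1-c)^4*(N:ℝ)^4) := by
      rw [hNc4]
      exact (div_le_div_iff_of_pos_right (mul_pos h1c4 hN4)).mpr hM4
    have e1 : (4*(N:ℝ)^2)/((1-c)^4*(N:ℝ)^4) = 4/((1-c)^4*(N:ℝ)^2) := by
      field_simp
    have b3 : 4/((1-c)^4*(N:ℝ)^2) ≤ 4/((1-c)^4*(N:ℝ)) := by
      apply div_le_div_of_nonneg_left (by norm_num) (mul_pos h1c4 hNpos)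
      exact mul_le_mul_of_nonneg_left hNN2 h1c4.le
    have b2 : M/t^4 ≤ (4*(N:ℝ)^2)/(ε^4*(N:ℝ)^4) := by
      rw [ht4e]
      exact (div_le_div_iff_of_pos_right (mul_pos hε4 hN4)).mpr hM4
    have e2 : (4*(N:ℝ)^2)/(ε^4*(N:ℝ)^4) = 4/(ε^4*(N:ℝ)^2) := by
      field_simp
    have b4 : 4/(ε^4*(N:ℝ)^2) ≤ 4/(ε^4*(N:ℝ)) := by
      apply div_le_div_of_nonneg_left (by norm_num) (mul_pos hε4 hNpos)
      exact mul_le_mul_of_nonneg_left hNN2 hε4.le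
    have b5 : L * (M/((N:ℝ)-c*N)^4 + M/t^4) ≤ L * (4/((1-c)^4*(N:ℝ)) + 4/(ε^4*(N:ℝ))) := by
      apply mul_le_mul_of_nonneg_left _ hL0.le
      linarith only [b1, e1, b3, b2, e2, b4]
    have e3 : L*(4/((1-c)^4*(N:ℝ)) + 4/(ε^4*(N:ℝ))) = (4*L/ε^4 + 4*L/(1-c)^4)/N := by
      field_simp; ring
    have h3 : (4*L/ε^4 + 4*L/(1-c)^4)*(2/δ') < (N:ℝ) := hRN2
    have h4 : (4*L/ε^4 + 4*L/(1-c)^4)/N ≤ δ'/2 := by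
      rw [div_le_div_iff₀ hNpos two_pos]
      have h5 := mul_lt_mul_of_pos_right h3 hδ'0
      have e4 : ((4*L/ε^4 + 4*L/(1-c)^4)*(2/δ'))*δ' = (4*L/ε^4 + 4*L/(1-c)^4)*2 := by
        field_simp
      rw [e4] at h5
      nlinarith only [h5]
    linarith only [b5, e3, h4]
  -- upper bound
  have upper : Real.exp (-(c*N)) * X ≤ L + δ' := by
    have hsum : X ≤ (L+δ'/2) * SQ + ((N:ℝ)/t^4) * SC := by
      rw [hXw, ← hsplitA (L+δ'/2)]
      exact Finset.sum_le_sum up_pt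
    have hA : 0 ≤ L + δ'/2 := by linarith only [hL0, hδ'0]
    have hB : 0 ≤ (N:ℝ)/t^4 := div_nonneg hNpos.le ht4.le
    have c1 : Real.exp (-(c*N)) * X
        ≤ Real.exp (-(c*N)) * ((L+δ'/2) * SQ + ((N:ℝ)/t^4) * SC) :=
      mul_le_mul_of_nonneg_left hsum hexp.le
    have c2 : (L+δ'/2) * SQ + ((N:ℝ)/t^4) * SC
        ≤ (L+δ'/2) * Real.exp (c*N) + ((N:ℝ)/t^4) * (M * Real.exp (c*N)) := by
      have d1 := mul_le_mul_of_nonneg_left hSQ_le hA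
      have d2 := mul_le_mul_of_nonneg_left hC hB
      rw [← hM] at d2
      linarith only [d1, d2]
    have c3 : Real.exp (-(c*N)) * ((L+δ'/2) * Real.exp (c*N) + ((N:ℝ)/t^4) * (M * Real.exp (c*N)))
        = (L+δ'/2) + ((N:ℝ)/t^4) * M := by
      have e5 : Real.exp (-(c*N)) * ((L+δ'/2) * Real.exp (c*N) + ((N:ℝ)/t^4) * (M * Real.exp (c*N)))
          = ((L+δ'/2) + ((N:ℝ)/t^4) * M) * (Real.exp (-(c*N)) * Real.exp (c*N)) := by ring
      rw [e5, hexpmul, mul_one]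
    have c4 := mul_le_mul_of_nonneg_left c2 hexp.le
    rw [c3] at c4
    linarith only [c1, c4, hE1, hδ'0]
  -- lower bound
  have lower : L - δ' ≤ Real.exp (-(c*N)) * X := by
    have hLδ : 0 < L - δ'/2 := by linarith only [hL1, hδ'1]
    have hsum : (L-δ'/2) * SQ - ((L-δ'/2)/t^4) * SC ≤ X := by
      rw [hXw, ← hsplitB (L-δ'/2)]
      exact Finset.sum_le_sum lo_pt
    have e1 : Real.exp (-(c*N)) * ((L-δ'/2) * SQ - ((L-δ'/2)/t^4) * SC)
        ≤ Real.exp (-(c*N)) * X :=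
      mul_le_mul_of_nonneg_left hsum hexp.le
    have hQlow : 1 - M/((N:ℝ)-c*N)^4 ≤ Real.exp (-(c*N)) * SQ := by
      have h := hSQ_ge
      rw [← hM] at h
      have h2 := mul_le_mul_of_nonneg_left h hexp.le
      rw [mul_sub] at h2
      have e2 : Real.exp (-(c*N)) * (M * Real.exp (c*N) / ((N:ℝ)-c*N)^4)
          = M/((N:ℝ)-c*N)^4 * (Real.exp (-(c*N)) * Real.exp (c*N)) := by ring
      rw [e2, hexpmul, mul_one] at h2
      linarith only [h2, hexpmul]
    have hChigh : Real.exp (-(c*N)) * SC ≤ M := by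
      have h2 := mul_le_mul_of_nonneg_left hC hexp.le
      rw [← hM] at h2
      have e2 : Real.exp (-(c*N)) * (M * Real.exp (c*N))
          = M * (Real.exp (-(c*N)) * Real.exp (c*N)) := by ring
      rw [e2, hexpmul, mul_one] at h2
      linarith only [h2]
    have b1 : (L-δ'/2) * (1 - M/((N:ℝ)-c*N)^4) ≤ (L-δ'/2) * (Real.exp (-(c*N)) * SQ) :=
      mul_le_mul_of_nonneg_left hQlow hLδ.le
    have b2 : ((L-δ'/2)/t^4) * (Real.exp (-(c*N)) * SC) ≤ ((L-δ'/2)/t^4) * M :=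
      mul_le_mul_of_nonneg_left hChigh (div_nonneg hLδ.le ht4.le)
    have e3 : Real.exp (-(c*N)) * ((L-δ'/2) * SQ - ((L-δ'/2)/t^4) * SC)
        = (L-δ'/2) * (Real.exp (-(c*N)) * SQ) - ((L-δ'/2)/t^4) * (Real.exp (-(c*N)) * SC) := by
      ring
    rw [e3] at e1
    have hA3 : 0 ≤ M/((N:ℝ)-c*N)^4 := div_nonneg hM0 (by positivity)
    have hA4 : 0 ≤ M/t^4 := div_nonneg hM0 ht4.le
    have hLL : L - δ'/2 ≤ L := by linarith only [hδ'0]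
    have b3 : (L-δ'/2) * (M/((N:ℝ)-c*N)^4) ≤ L * (M/((N:ℝ)-c*N)^4) :=
      mul_le_mul_of_nonneg_right hLL hA3
    have b4 : ((L-δ'/2)/t^4) * M ≤ L * (M/t^4) := by
      have e4 : ((L-δ'/2)/t^4) * M = (L-δ'/2) * (M/t^4) := by ring
      rw [e4]
      exact mul_le_mul_of_nonneg_right hLL hA4
    nlinarith only [e1, b1, b2, b3, b4, hE23, hLδ]
  rw [Real.dist_eq]
  have habs : |Real.exp (-(c*(N:ℝ))) * X - L| ≤ δ' :=
    abs_le.mpr ⟨by linarith only [lower], by linarith only [upper]⟩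
  have : δ' < δ := by linarith only [hδ'δ, hδ]
  linarith only [habs, this]

lemma reindex (l : ℝ) (hl0 : 0 < l) (N : ℕ) (hN : 1 ≤ N) :
    ∑ n ∈ Finset.Icc 1 N,
        (Nat.factorial (N - 1) : ℝ) / ((n : ℝ) * (Nat.factorial (N - n) : ℝ)) * (l / N) ^ (n - 1)
      = ((N-1)! : ℝ) * (l/(N:ℝ))^(N-1) *
        ∑ j ∈ Finset.range N, ((N:ℝ)/l) ^ j / (((N:ℝ) - (j:ℝ)) * (j ! : ℝ)) := by
  have hNpos : (0:ℝ) < N := by exact_mod_cast hN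
  have hlN : l/(N:ℝ) ≠ 0 := by positivity
  rw [Finset.mul_sum]
  refine Finset.sum_nbij' (fun n => N - n) (fun j => N - j) ?_ ?_ ?_ ?_ ?_
  · intro n hn
    simp only [Finset.mem_Icc] at hn
    simp only [Finset.mem_range]
    omega
  · intro j hj
    simp only [Finset.mem_range] at hj
    simp only [Finset.mem_Icc]
    omega
  · intro n hn
    simp only [Finset.mem_Icc] at hn
    omega
  · intro j hj
    simp only [Finset.mem_range] at hj
    omega
  · intro n hn
    simp only [Finset.mem_Icc] at hn
    obtain ⟨hn1, hnN⟩ := hn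
    have hcast : ((N - n : ℕ) : ℝ) = (N:ℝ) - (n:ℝ) := by
      push_cast [hnN]
      ring
    have key : (l/(N:ℝ))^(N-1) * ((N:ℝ)/l)^(N-n) = (l/(N:ℝ))^(n-1) := by
      have h1 : ((N:ℝ)/l) = (l/(N:ℝ))⁻¹ := by rw [inv_div]
      have h2 : N - n ≤ N - 1 := by omega
      rw [h1, inv_pow, ← pow_sub₀ _ hlN h2]
      congr 1
      omega
    have hn0 : ((n:ℝ)) ≠ 0 := by
      have : (0:ℝ) < n := by exact_mod_cast hn1
      linarith
    have hcast2 : (N:ℝ) - ((N - n : ℕ) : ℝ) = (n:ℝ) := by rw [hcast]; ring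
    rw [hcast2]
    have e1 : ((N-1)! : ℝ) * (l/(N:ℝ))^(N-1) * (((N:ℝ)/l) ^ (N-n) / ((n:ℝ) * ((N-n)! : ℝ)))
        = ((N-1)! : ℝ) * ((l/(N:ℝ))^(N-1) * ((N:ℝ)/l)^(N-n)) / ((n:ℝ) * ((N-n)! : ℝ)) := by
      ring
    rw [e1, key]
    ring

theorem stmt_11 (l : ℝ) (hl : 1 < l) :
    Filter.Tendsto
      (fun N : ℕ =>
        (∑ n ∈ Finset.Icc 1 N,
          (Nat.factorial (N - 1) : ℝ) / ((n : ℝ) * (Nat.factorial (N - n) : ℝ)) *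
            (l / N) ^ (n - 1)) /
        ((Real.sqrt (2 * Real.pi) / (l - 1)) *
          Real.exp ((Real.log l - 1 + 1 / l) * N) / Real.sqrt N))
      Filter.atTop (nhds 1) := by
  have hl0 : (0:ℝ) < l := by linarith
  have hlne : l ≠ 0 := by linarith
  have hl1 : l - 1 ≠ 0 := by linarith
  have hB := claimA l hl
  have hstir : Tendsto (fun N : ℕ => Stirling.stirlingSeq N / Real.sqrt π) atTop (nhds 1) := by
    have hπ : Real.sqrt π ≠ 0 := ne_of_gt (Real.sqrt_pos.mpr Real.pi_pos)
    have h := Stirling.tendsto_stirlingSeq_sqrt_pi.div_const (Real.sqrt π)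
    rwa [div_self hπ] at h
  have hmain := (hstir.mul hB).mul_const ((l-1)/l)
  have hone : (1 * (l/(l-1))) * ((l-1)/l) = 1 := by field_simp
  rw [hone] at hmain
  refine hmain.congr' ?_
  filter_upwards [eventually_ge_atTop 1] with N hN
  obtain ⟨m, rfl⟩ : ∃ m, N = m + 1 := ⟨N - 1, by omega⟩
  rw [reindex l hl0 (m+1) (by omega)]
  rw [← Finset.mul_sum]
  simp only [Stirling.stirlingSeq, Nat.add_sub_cancel]
  have hexpand : Real.exp ((Real.log l - 1 + 1/l) * ((m+1:ℕ):ℝ))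
      = l^(m+1) * (Real.exp 1 ^ (m+1))⁻¹ * Real.exp (((m+1:ℕ):ℝ)/l) := by
    have e1 : (Real.log l - 1 + 1/l) * ((m+1:ℕ):ℝ)
        = ((m+1:ℕ):ℝ) * Real.log l + (-((m+1:ℕ):ℝ)) + ((m+1:ℕ):ℝ)/l := by ring
    rw [e1, Real.exp_add, Real.exp_add, Real.exp_nat_mul, Real.exp_log hl0, Real.exp_neg,
      ← Real.exp_nat_mul, mul_one]
  rw [hexpand, Real.exp_neg]
  rw [Real.sqrt_mul (by norm_num : (0:ℝ) ≤ 2) π,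
    Real.sqrt_mul (by norm_num : (0:ℝ) ≤ 2) ((m+1:ℕ):ℝ)]
  rw [Nat.factorial_succ]
  push_cast
  set s := Real.sqrt ((m:ℝ) + 1) with hs
  have hs2 : s^2 = ((m:ℝ) + 1) := Real.sq_sqrt (by positivity)
  rw [← hs2]
  have hspos : 0 < s := Real.sqrt_pos.mpr (by positivity)
  have hsne : s ≠ 0 := ne_of_gt hspos
  have h2ne : Real.sqrt 2 ≠ 0 := ne_of_gt (Real.sqrt_pos.mpr (by norm_num))
  have hπne : Real.sqrt π ≠ 0 := ne_of_gt (Real.sqrt_pos.mpr Real.pi_pos)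
  have hfne : ((m ! : ℕ):ℝ) ≠ 0 := Nat.cast_ne_zero.mpr (Nat.factorial_ne_zero m)
  have hexpne : Real.exp 1 ≠ 0 := Real.exp_ne_zero 1
  have hexpne2 : Real.exp (s^2/l) ≠ 0 := Real.exp_ne_zero _
  field_simp
  rw [div_pow, div_pow]
  field_simp
  ring
end

section
/- For fixed λ > 1, C_N := ∑_{n=1}^N (N-1)!/(N-n)! · (λ/N)^{n-1} satisfies lim_{N→∞} C_N / ( (√(2π)/λ) · √N · exp((log λ - 1 + 1/λ)·N) ) = 1. -/
open Finset Filter Real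

private lemma aux12_sum_rewrite (l : ℝ) (hl : 1 < l) (N : ℕ) (hN : 1 ≤ N) :
    (∑ n ∈ Finset.Icc 1 N,
      (Nat.factorial (N - 1) : ℝ) / (Nat.factorial (N - n) : ℝ) * (l / N) ^ (n - 1))
    = (Nat.factorial (N-1) : ℝ) * (l / N) ^ (N - 1) *
        ∑ j ∈ range N, ((N : ℝ) / l) ^ j / (Nat.factorial j : ℝ) := by
  have hl0 : (0:ℝ) < l := lt_trans one_pos hl
  have hN0 : (0:ℝ) < N := by exact_mod_cast hN
  have hx : (l / N : ℝ) ≠ 0 := by positivity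
  rw [← Finset.Ico_add_one_right_eq_Icc, Finset.sum_Ico_eq_sum_range]
  simp only [Nat.add_sub_cancel, Nat.succ_sub_one]
  rw [← Finset.sum_range_reflect]
  rw [Finset.mul_sum]
  apply Finset.sum_congr rfl
  intro j hj
  rw [Finset.mem_range] at hj
  have h1 : N - (1 + (N - 1 - j)) = j := by omega
  have h2 : 1 + (N - 1 - j) - 1 = N - 1 - j := by omega
  rw [h1, h2]
  rw [pow_sub₀ _ hx (by omega : j ≤ N - 1)]
  have : ((N:ℝ)/l)^j = ((l/N)^j)⁻¹ := by
    rw [← inv_pow, inv_div]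
  rw [this]
  ring

private lemma aux12_stirling_eq (l : ℝ) (hl : 1 < l) (N : ℕ) (hN : 1 ≤ N) :
    (Nat.factorial (N-1) : ℝ) * (l / N) ^ (N - 1) * Real.exp (N / l) /
      ((Real.sqrt (2 * Real.pi) / l) * Real.sqrt N *
        Real.exp ((Real.log l - 1 + 1 / l) * N))
    = Stirling.stirlingSeq N / Real.sqrt Real.pi := by
  have hl0 : (0:ℝ) < l := lt_trans one_pos hl
  have hN0 : (0:ℝ) < N := by exact_mod_cast hN
  have hexp : Real.exp ((Real.log l - 1 + 1 / l) * N)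
      = l ^ N / (Real.exp 1) ^ N * Real.exp (N / l) := by
    rw [show (Real.log l - 1 + 1 / l) * N = N * Real.log l - N * 1 + N * (1/l) by ring,
      Real.exp_add, Real.exp_sub, Real.exp_nat_mul, Real.exp_nat_mul, Real.exp_log hl0]
    ring_nf
  rw [hexp, Stirling.stirlingSeq]
  have hsq2 : Real.sqrt (2 * Real.pi) = Real.sqrt 2 * Real.sqrt Real.pi :=
    Real.sqrt_mul (by norm_num) _
  have hsq2N : Real.sqrt (2 * N) = Real.sqrt 2 * Real.sqrt N :=
    Real.sqrt_mul (by norm_num) _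
  have hfac : (Nat.factorial N : ℝ) = N * (Nat.factorial (N-1)) := by
    rw [show N = (N-1) + 1 by omega, Nat.factorial_succ]
    push_cast
    ring
  have hlN : l ^ N = l ^ (N-1) * l := by
    rw [← pow_succ, show N - 1 + 1 = N by omega]
  have hNN : (N:ℝ) ^ N = (N:ℝ) ^ (N-1) * N := by
    rw [← pow_succ, show N - 1 + 1 = N by omega]
  have hlN' : (l / N) ^ (N-1) = l ^ (N-1) / (N:ℝ) ^ (N-1) := div_pow _ _ _
  have hND : ((N:ℝ) / Real.exp 1) ^ N = (N:ℝ)^N / (Real.exp 1) ^ N := div_pow _ _ _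
  rw [hfac, hlN, hlN', hND, hNN, hsq2, hsq2N]
  have h1 : Real.sqrt Real.pi ≠ 0 := by positivity
  have h2 : Real.sqrt 2 ≠ 0 := by positivity
  have h3 : Real.sqrt (N:ℝ) ≠ 0 := by positivity
  have h4 : (N:ℝ) ^ (N-1) ≠ 0 := by positivity
  have h5 : Real.exp 1 ^ N ≠ 0 := by positivity
  have h6 : Real.exp ((N:ℝ)/l) ≠ 0 := Real.exp_ne_zero _
  have h7 : l ≠ 0 := ne_of_gt hl0
  have h8 : l ^ (N-1) ≠ 0 := pow_ne_zero _ h7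
  have h9 : (N:ℝ) ≠ 0 := ne_of_gt hN0
  field_simp

private lemma aux12_tail (l : ℝ) (hl : 1 < l) (N : ℕ) (hN : 1 ≤ N) :
    Real.exp ((N:ℝ)/l) - ∑ j ∈ range N, ((N:ℝ)/l) ^ j / (Nat.factorial j : ℝ)
      ≤ ((N:ℝ)/l) ^ N / (Nat.factorial N : ℝ) * (1 - 1/l)⁻¹ := by
  have hl0 : (0:ℝ) < l := lt_trans one_pos hl
  set μ : ℝ := (N:ℝ)/l with hμ
  have hμ0 : 0 ≤ μ := by positivity
  have hr0 : (0:ℝ) ≤ 1/l := by positivity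
  have hr1 : 1/l < 1 := by rw [div_lt_one hl0]; exact hl
  have hsum : Summable (fun j : ℕ => μ ^ j / (Nat.factorial j : ℝ)) :=
    Real.summable_pow_div_factorial μ
  have hexp : Real.exp μ = ∑' j : ℕ, μ ^ j / (Nat.factorial j : ℝ) := by
    rw [Real.exp_eq_exp_ℝ, NormedSpace.exp_eq_tsum_div]
  have key := Summable.sum_add_tsum_nat_add N hsum
  rw [hexp, ← key, add_sub_cancel_left]
  have hterm : ∀ i : ℕ, μ ^ (i + N) / (Nat.factorial (i + N) : ℝ)
      ≤ μ ^ N / (Nat.factorial N : ℝ) * (1/l) ^ i := by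
    intro i
    have hfac : ((Nat.factorial N : ℝ)) * ((N:ℝ)+1) ^ i ≤ (Nat.factorial (i + N) : ℝ) := by
      have := Nat.factorial_mul_pow_le_factorial (m := N) (n := i)
      rw [Nat.add_comm N i] at this
      exact_mod_cast this
    have h1 : μ ^ (i + N) / (Nat.factorial (i + N) : ℝ)
        ≤ μ ^ (i + N) / ((Nat.factorial N : ℝ) * ((N:ℝ)+1) ^ i) :=
      div_le_div_of_nonneg_left (by positivity) (by positivity) hfac
    refine h1.trans ?_
    have heq : μ ^ (i + N) / ((Nat.factorial N : ℝ) * ((N:ℝ)+1) ^ i)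
        = μ ^ N / (Nat.factorial N : ℝ) * (μ / ((N:ℝ)+1)) ^ i := by
      have hF : (Nat.factorial N : ℝ) ≠ 0 := by positivity
      have hN1 : ((N:ℝ)+1) ≠ 0 := by positivity
      rw [hμ]
      field_simp
      rw [div_mul_eq_div_div, div_pow (_ / _), pow_add]
      field_simp
    rw [heq]
    apply mul_le_mul_of_nonneg_left _ (by positivity)
    apply pow_le_pow_left₀ (by positivity)
    rw [div_le_div_iff₀ (by positivity) hl0, hμ, div_mul_cancel₀ _ (ne_of_gt hl0)]
    linarith
  calc (∑' i : ℕ, μ ^ (i + N) / (Nat.factorial (i + N) : ℝ))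
      ≤ ∑' i : ℕ, μ ^ N / (Nat.factorial N : ℝ) * (1/l) ^ i := by
        apply Summable.tsum_le_tsum hterm ((summable_nat_add_iff N).2 hsum)
        exact (summable_geometric_of_lt_one hr0 hr1).mul_left _
    _ = μ ^ N / (Nat.factorial N : ℝ) * (1 - 1/l)⁻¹ := by
        rw [tsum_mul_left, tsum_geometric_of_lt_one hr0 hr1]

private lemma aux12_pow_div_fac_le (N : ℕ) :
    ((N:ℝ))^N / (Nat.factorial N : ℝ) ≤ Real.exp N := by
  have h := Real.sum_le_exp_of_nonneg (x := (N:ℝ)) (by positivity) (N+1)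
  refine le_trans ?_ h
  exact Finset.single_le_sum (f := fun i => (N:ℝ)^i / (Nat.factorial i : ℝ))
    (fun i _ => by positivity) (Finset.self_mem_range_succ N)

private lemma aux12_g_tendsto (l : ℝ) (hl : 1 < l) :
    Tendsto (fun N : ℕ =>
      ((N:ℝ)/l) ^ N / (Nat.factorial N : ℝ) * (1 - 1/l)⁻¹ / Real.exp ((N:ℝ)/l))
      atTop (nhds 0) := by
  have hl0 : (0:ℝ) < l := lt_trans one_pos hl
  set a : ℝ := 1 - 1/l - Real.log l with ha
  have ha0 : a < 0 := by
    have h := Real.add_one_lt_exp (x := 1/l - 1) (by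
      intro h
      have : l = 1 := by field_simp at h; linarith
      linarith)
    have h2 : 1/l < Real.exp (1/l - 1) := by linarith
    have h3 := Real.log_lt_log (by positivity) h2
    rw [Real.log_exp, Real.log_div one_ne_zero (ne_of_gt hl0), Real.log_one] at h3
    rw [ha]; linarith
  set c : ℝ := (1 - 1/l)⁻¹ with hc
  have hc0 : 0 ≤ c := by
    rw [hc]
    have : (0:ℝ) < 1 - 1/l := by
      have : 1/l < 1 := by rw [div_lt_one hl0]; exact hl
      linarith
    positivity
  have hupper : ∀ N : ℕ, ((N:ℝ)/l) ^ N / (Nat.factorial N : ℝ) * c / Real.exp ((N:ℝ)/l)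
      ≤ c * Real.exp (a * N) := by
    intro N
    have hE : Real.exp (a * N) = Real.exp N / (l ^ N * Real.exp ((N:ℝ)/l)) := by
      rw [ha, show (1 - 1/l - Real.log l) * N = (N:ℝ) - N * Real.log l - N * (1/l) by ring,
        Real.exp_sub, Real.exp_sub, Real.exp_nat_mul, Real.exp_log hl0]
      rw [div_div]
      congr 2
      rw [mul_one_div]
    rw [hE]
    have hb : ((N:ℝ)/l) ^ N / (Nat.factorial N : ℝ) ≤ Real.exp N / l ^ N := by
      rw [div_pow, div_div]
      rw [div_le_div_iff₀ (by positivity) (by positivity)]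
      have h0 : (N:ℝ)^N ≤ Real.exp N * (Nat.factorial N : ℝ) :=
        (div_le_iff₀ (by positivity)).1 (aux12_pow_div_fac_le N)
      calc (N:ℝ)^N * l^N ≤ Real.exp N * (Nat.factorial N : ℝ) * l^N :=
            mul_le_mul_of_nonneg_right h0 (by positivity)
        _ = Real.exp N * (l^N * (Nat.factorial N : ℝ)) := by ring
    calc ((N:ℝ)/l) ^ N / (Nat.factorial N : ℝ) * c / Real.exp ((N:ℝ)/l)
        ≤ Real.exp N / l ^ N * c / Real.exp ((N:ℝ)/l) :=
          (div_le_div_iff_of_pos_right (Real.exp_pos _)).2 (mul_le_mul_of_nonneg_right hb hc0)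
      _ = c * (Real.exp N / (l ^ N * Real.exp ((N:ℝ)/l))) := by
          field_simp
  have hbig : Tendsto (fun N : ℕ => c * Real.exp (a * N)) atTop (nhds 0) := by
    have h1 : Tendsto (fun N : ℕ => a * (N:ℝ)) atTop atBot :=
      Tendsto.const_mul_atTop_of_neg ha0 tendsto_natCast_atTop_atTop
    have := (Real.tendsto_exp_atBot.comp h1).const_mul c
    simpa using this
  apply tendsto_of_tendsto_of_tendsto_of_le_of_le tendsto_const_nhds hbig
    (fun N => by positivity) hupper

theorem stmt_12 (l : ℝ) (hl : 1 < l) :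
    Filter.Tendsto
      (fun N : ℕ =>
        (∑ n ∈ Finset.Icc 1 N,
          (Nat.factorial (N - 1) : ℝ) / (Nat.factorial (N - n) : ℝ) * (l / N) ^ (n - 1)) /
        ((Real.sqrt (2 * Real.pi) / l) * Real.sqrt N *
          Real.exp ((Real.log l - 1 + 1 / l) * N)))
      Filter.atTop (nhds 1) := by
  have hl0 : (0:ℝ) < l := lt_trans one_pos hl
  set A : ℕ → ℝ := fun N => Stirling.stirlingSeq N / Real.sqrt Real.pi with hA
  set B : ℕ → ℝ := fun N =>
    (∑ j ∈ range N, ((N:ℝ)/l) ^ j / (Nat.factorial j : ℝ)) / Real.exp ((N:ℝ)/l) with hB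
  have hAten : Tendsto A atTop (nhds 1) := by
    have := Stirling.tendsto_stirlingSeq_sqrt_pi.div_const (Real.sqrt Real.pi)
    rwa [div_self (by positivity : Real.sqrt Real.pi ≠ 0)] at this
  have hBten : Tendsto B atTop (nhds 1) := by
    have hg := aux12_g_tendsto l hl
    have hlow : Tendsto (fun N : ℕ =>
        1 - ((N:ℝ)/l) ^ N / (Nat.factorial N : ℝ) * (1 - 1/l)⁻¹ / Real.exp ((N:ℝ)/l))
        atTop (nhds 1) := by
      have := (tendsto_const_nhds (x := (1:ℝ)) (f := atTop (α := ℕ))).sub hg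
      simpa using this
    apply tendsto_of_tendsto_of_tendsto_of_le_of_le' hlow tendsto_const_nhds
    · filter_upwards [eventually_ge_atTop 1] with N hN
      have htail := aux12_tail l hl N hN
      have hE := Real.exp_pos ((N:ℝ)/l)
      show _ ≤ B N
      rw [hB]
      rw [sub_le_iff_le_add, ← add_div, le_div_iff₀ hE, one_mul]
      linarith
    · filter_upwards [] with N
      rw [hB]
      rw [div_le_one (Real.exp_pos _)]
      exact Real.sum_le_exp_of_nonneg (by positivity) N
  have heq : ∀ᶠ N : ℕ in atTop,
      (∑ n ∈ Finset.Icc 1 N,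
          (Nat.factorial (N - 1) : ℝ) / (Nat.factorial (N - n) : ℝ) * (l / N) ^ (n - 1)) /
        ((Real.sqrt (2 * Real.pi) / l) * Real.sqrt N *
          Real.exp ((Real.log l - 1 + 1 / l) * N)) = A N * B N := by
    filter_upwards [eventually_ge_atTop 1] with N hN
    rw [aux12_sum_rewrite l hl N hN]
    simp only [hA, hB]
    rw [← aux12_stirling_eq l hl N hN]
    set D := (Real.sqrt (2 * Real.pi) / l) * Real.sqrt (N:ℝ) *
      Real.exp ((Real.log l - 1 + 1 / l) * N)
    set S := ∑ j ∈ range N, ((N:ℝ)/l) ^ j / (Nat.factorial j : ℝ)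
    set F := (Nat.factorial (N-1) : ℝ) * (l / N) ^ (N - 1)
    rw [div_mul_div_comm, show F * Real.exp ((N:ℝ)/l) * S = F * S * Real.exp ((N:ℝ)/l) by ring,
      mul_div_mul_right _ _ (Real.exp_ne_zero _)]
  have := hAten.mul hBten
  rw [mul_one] at this
  exact Tendsto.congr' (heq.mono fun N h => h.symm) this
end

section
/- For 0 < λ < 1: (a) liminf over N of ∑_{n=1}^N (∏_{i=1}^{n-1}(1-i/N))·λ^{n-1}/n is at least ∑_{n=1}^k λ^{n-1}/n for every k; (b) limsup over N of the same sum is at most ∑_{n=1}^k λ^{n-1}/n + λ^k/(1-λ) for every k. -/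
open Finset Filter

theorem stmt_15 (l : ℝ) (hl : 0 < l) (hl1 : l < 1) (k : ℕ) :
    ((∑ n ∈ Finset.Icc 1 k, l ^ (n - 1) / n) ≤
      Filter.liminf
        (fun N : ℕ => ∑ n ∈ Finset.Icc 1 N,
          (∏ i ∈ Finset.Icc 1 (n - 1), (1 - (i : ℝ) / N)) * l ^ (n - 1) / n)
        Filter.atTop) ∧
    (Filter.limsup
        (fun N : ℕ => ∑ n ∈ Finset.Icc 1 N,
          (∏ i ∈ Finset.Icc 1 (n - 1), (1 - (i : ℝ) / N)) * l ^ (n - 1) / n)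
        Filter.atTop ≤
      (∑ n ∈ Finset.Icc 1 k, l ^ (n - 1) / n) + l ^ k / (1 - l)) := by
  set f : ℕ → ℝ := fun N => ∑ n ∈ Finset.Icc 1 N,
      (∏ i ∈ Finset.Icc 1 (n - 1), (1 - (i : ℝ) / N)) * l ^ (n - 1) / n with hfdef
  -- product bounds
  have hprod : ∀ N n : ℕ, n ∈ Finset.Icc 1 N →
      0 ≤ ∏ i ∈ Finset.Icc 1 (n - 1), (1 - (i : ℝ) / N) ∧
      (∏ i ∈ Finset.Icc 1 (n - 1), (1 - (i : ℝ) / N)) ≤ 1 := by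
    intro N n hn
    simp only [Finset.mem_Icc] at hn
    have hN : (0 : ℝ) < N := by
      have : 1 ≤ N := le_trans hn.1 hn.2
      exact_mod_cast this
    have hfac : ∀ i ∈ Finset.Icc 1 (n - 1), 0 ≤ 1 - (i : ℝ) / N := by
      intro i hi
      simp only [Finset.mem_Icc] at hi
      have hiN : (i : ℝ) ≤ N := by
        have : i ≤ N := le_trans hi.2 (le_trans (Nat.sub_le n 1) hn.2)
        exact_mod_cast this
      have : (i : ℝ) / N ≤ 1 := (div_le_one hN).2 hiN
      linarith
    refine ⟨Finset.prod_nonneg hfac, Finset.prod_le_one hfac ?_⟩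
    intro i hi
    have : (0 : ℝ) ≤ (i : ℝ) / N := by positivity
    linarith
  have hterm : ∀ N n : ℕ, n ∈ Finset.Icc 1 N →
      0 ≤ (∏ i ∈ Finset.Icc 1 (n - 1), (1 - (i : ℝ) / N)) * l ^ (n - 1) / n := by
    intro N n hn
    have := (hprod N n hn).1
    positivity
  have hf0 : ∀ N, 0 ≤ f N := fun N => Finset.sum_nonneg (hterm N)
  set g : ℕ → ℝ := fun N => ∑ n ∈ Finset.Icc 1 k,
      (∏ i ∈ Finset.Icc 1 (n - 1), (1 - (i : ℝ) / N)) * l ^ (n - 1) / n with hgdef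
  have hg : Tendsto g atTop (nhds (∑ n ∈ Finset.Icc 1 k, l ^ (n - 1) / n)) := by
    apply tendsto_finset_sum
    intro n _
    have hp : Tendsto (fun N : ℕ => ∏ i ∈ Finset.Icc 1 (n - 1), (1 - (i : ℝ) / N)) atTop
        (nhds 1) := by
      have := tendsto_finset_prod (Finset.Icc 1 (n - 1))
        (f := fun (i : ℕ) (N : ℕ) => 1 - (i : ℝ) / N)
        (fun i _ => by
          have h0 : Tendsto (fun N : ℕ => (i : ℝ) / N) atTop (nhds 0) :=
            Tendsto.div_atTop tendsto_const_nhds tendsto_natCast_atTop_atTop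
          simpa using (tendsto_const_nhds (x := (1 : ℝ))).sub h0)
      simpa using this
    have h2 := (hp.mul_const (l ^ (n - 1))).div_const (n : ℝ)
    simpa using h2
  have hgf : ∀ᶠ N in atTop, g N ≤ f N := by
    refine eventually_atTop.2 ⟨k, fun N hN => ?_⟩
    exact Finset.sum_le_sum_of_subset_of_nonneg (Finset.Icc_subset_Icc_right hN)
      (fun n hn _ => hterm N n hn)
  have hub : ∀ᶠ N in atTop, f N ≤ (∑ n ∈ Finset.Icc 1 k, l ^ (n - 1) / n) + l ^ k / (1 - l) := by
    refine eventually_atTop.2 ⟨k, fun N hN => ?_⟩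
    have h1 : f N ≤ ∑ n ∈ Finset.Icc 1 N, l ^ (n - 1) / n := by
      apply Finset.sum_le_sum
      intro n hn
      obtain ⟨hp0, hp1⟩ := hprod N n hn
      have hx : (0 : ℝ) ≤ l ^ (n - 1) / n := by positivity
      calc (∏ i ∈ Finset.Icc 1 (n - 1), (1 - (i : ℝ) / N)) * l ^ (n - 1) / n
          = (∏ i ∈ Finset.Icc 1 (n - 1), (1 - (i : ℝ) / N)) * (l ^ (n - 1) / n) := by ring
        _ ≤ 1 * (l ^ (n - 1) / n) := mul_le_mul_of_nonneg_right hp1 hx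
        _ = l ^ (n - 1) / n := one_mul _
    have hsplit : ∑ n ∈ Finset.Icc 1 N, l ^ (n - 1) / n =
        (∑ n ∈ Finset.Icc 1 k, l ^ (n - 1) / n) + ∑ n ∈ Finset.Ioc k N, l ^ (n - 1) / n := by
      have e1 : Finset.Icc 1 N = Finset.Ioc 0 N := Finset.Icc_add_one_left_eq_Ioc 0 N
      have e2 : Finset.Icc 1 k = Finset.Ioc 0 k := Finset.Icc_add_one_left_eq_Ioc 0 k
      rw [e1, e2]
      exact (Finset.sum_Ioc_consecutive _ (Nat.zero_le k) hN).symm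
    have htail : ∑ n ∈ Finset.Ioc k N, l ^ (n - 1) / n ≤ l ^ k / (1 - l) := by
      have step1 : ∑ n ∈ Finset.Ioc k N, l ^ (n - 1) / n ≤
          ∑ n ∈ Finset.Ioc k N, l ^ (n - 1) := by
        apply Finset.sum_le_sum
        intro n hn
        simp only [Finset.mem_Ioc] at hn
        have hn1 : (1 : ℝ) ≤ (n : ℝ) := by
          have : 1 ≤ n := by omega
          exact_mod_cast this
        exact div_le_self (by positivity) hn1
      have step2 : ∑ n ∈ Finset.Ioc k N, l ^ (n - 1) =
          ∑ i ∈ Finset.range (N - k), l ^ (k + i) := by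
        rw [show Finset.Ioc k N = Finset.Ico (k + 1) (N + 1) from by
              rw [Finset.Ico_add_one_right_eq_Icc, Finset.Icc_add_one_left_eq_Ioc],
          Finset.sum_Ico_eq_sum_range]
        apply Finset.sum_congr
        · congr 1
          omega
        · intro i _
          congr 1
          omega
      have step3 : ∑ i ∈ Finset.range (N - k), l ^ (k + i) ≤ l ^ k / (1 - l) := by
        have : ∑ i ∈ Finset.range (N - k), l ^ (k + i)
            = l ^ k * ∑ i ∈ Finset.range (N - k), l ^ i := by
          rw [Finset.mul_sum]
          exact Finset.sum_congr rfl fun i _ => by rw [pow_add]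
        rw [this]
        have hsum : ∑ i ∈ Finset.range (N - k), l ^ i ≤ (1 - l)⁻¹ := by
          have := Summable.sum_le_tsum (Finset.range (N - k))
            (fun i _ => pow_nonneg hl.le i) (summable_geometric_of_lt_one hl.le hl1)
          rwa [tsum_geometric_of_lt_one hl.le hl1] at this
        calc l ^ k * ∑ i ∈ Finset.range (N - k), l ^ i ≤ l ^ k * (1 - l)⁻¹ :=
              mul_le_mul_of_nonneg_left hsum (by positivity)
          _ = l ^ k / (1 - l) := by rw [div_eq_mul_inv]
      calc ∑ n ∈ Finset.Ioc k N, l ^ (n - 1) / n ≤ ∑ n ∈ Finset.Ioc k N, l ^ (n - 1) := step1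
        _ = ∑ i ∈ Finset.range (N - k), l ^ (k + i) := step2
        _ ≤ l ^ k / (1 - l) := step3
    calc f N ≤ ∑ n ∈ Finset.Icc 1 N, l ^ (n - 1) / n := h1
      _ = (∑ n ∈ Finset.Icc 1 k, l ^ (n - 1) / n) + ∑ n ∈ Finset.Ioc k N, l ^ (n - 1) / n :=
          hsplit
      _ ≤ (∑ n ∈ Finset.Icc 1 k, l ^ (n - 1) / n) + l ^ k / (1 - l) := by linarith [htail]
  constructor
  · calc (∑ n ∈ Finset.Icc 1 k, l ^ (n - 1) / n) = liminf g atTop := hg.liminf_eq.symm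
      _ ≤ liminf f atTop := liminf_le_liminf hgf hg.isBoundedUnder_ge
          (isCoboundedUnder_ge_of_eventually_le atTop hub)
  · exact limsup_le_of_le (isCoboundedUnder_le_of_le atTop hf0) hub
end
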